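/- arXiv:2312.03688 — 4 statements merged into one kernel-verified Lean document; each statement's English description precedes it below -/
import Mathlib

section
/- If G is a graph and a, b are positive integers with a ≥ b and a/b ≥ (1/2)·mad(G), then there exist spanning subgraphs G₁,…,G_a of G, each of which admits an orientation with maximum outdegree at most one, such that each edge of G belongs to at least b of them. -/
noncomputable section

namespace TwwPaper

open Finset

variable {V : Type*}

/-- The number of edges of `G` with both endpoints in `X`. -/
def edgesIn (G : SimpleGraph V) (X : Finset V) : ℕ :=
  Nat.card {e : Sym2 V // e ∈ G.edgeSet ∧ ∀ v ∈ e, v ∈ X}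

/-- The number of edges of `G`. -/
def edgeCount (G : SimpleGraph V) : ℕ := Nat.card G.edgeSet

/-- The maximum average degree of `G`: the maximum over nonempty vertex subsets `X`
of `2 e(G[X]) / |X|`. -/
def mad [Fintype V] (G : SimpleGraph V) : ℝ :=
  ⨆ X : {X : Finset V // X.Nonempty}, (2 * edgesIn G X.1 : ℝ) / X.1.card

/-- The degree of a vertex. -/
def deg (G : SimpleGraph V) (v : V) : ℕ := Nat.card (G.neighborSet v)

/-- The maximum degree `Δ(G)`. -/
def maxDeg [Fintype V] (G : SimpleGraph V) : ℕ := univ.sup (deg G)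

/-- `G` is `d`-regular. -/
def IsReg (G : SimpleGraph V) (d : ℕ) : Prop := ∀ v, deg G v = d

/-- `G` admits an orientation with maximum outdegree at most one:
an assignment of a tail (source) vertex to each edge, no vertex being
the tail of two distinct edges. -/
def HasOrientationOutdegLEOne (G : SimpleGraph V) : Prop :=
  ∃ f : G.edgeSet → V, (∀ e : G.edgeSet, f e ∈ (e : Sym2 V)) ∧ Function.Injective f

/-- Two lists (sequences) of the same length `r` are close if they contain a common
subsequence of length `r - 1`, obtained by deleting one entry from each. -/
def Close {S : Type*} (L M : List S) : Prop :=
  ∃ i < L.length, ∃ j < M.length, L.eraseIdx i = M.eraseIdx j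

section Partitions

variable [Fintype V] [DecidableEq V]

/-- `Q` is obtained from `P` by merging the two distinct parts `A` and `B`. -/
def IsMergeStep (P Q : Finpartition (univ : Finset V)) : Prop :=
  ∃ A ∈ P.parts, ∃ B ∈ P.parts, A ≠ B ∧
    Q.parts = insert (A ∪ B) ((P.parts.erase A).erase B)

/-- Degree of the part `A` in the quotient graph `G / P`. -/
def quotDeg (G : SimpleGraph V) (P : Finpartition (univ : Finset V)) (A : Finset V) : ℕ :=
  Nat.card {B : Finset V // B ∈ P.parts ∧ B ≠ A ∧ ∃ u ∈ A, ∃ v ∈ B, G.Adj u v}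

/-- Red degree of the part `A` with respect to the partition `P`: the number of other
parts `B` which are neither fully adjacent nor fully non-adjacent to `A`. -/
def redDeg (G : SimpleGraph V) (P : Finpartition (univ : Finset V)) (A : Finset V) : ℕ :=
  Nat.card {B : Finset V // B ∈ P.parts ∧ B ≠ A ∧ (∃ u ∈ A, ∃ v ∈ B, G.Adj u v) ∧
    ¬ (∀ u ∈ A, ∀ v ∈ B, G.Adj u v)}

/-- There is a sequence of partitions of `V(G)`, starting at the discrete partition,
ending with at most one part, each obtained from the previous one by merging two parts,
such that every part of every intermediate partition has `degFn`-degree at most `w`. -/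
def SeqOK (G : SimpleGraph V)
    (degFn : SimpleGraph V → Finpartition (univ : Finset V) → Finset V → ℕ) (w : ℕ) : Prop :=
  ∃ n : ℕ, ∃ P : Fin (n + 1) → Finpartition (univ : Finset V),
    (∀ A ∈ (P 0).parts, A.card = 1) ∧
    (P (Fin.last n)).parts.card ≤ 1 ∧
    (∀ i : Fin n, IsMergeStep (P i.castSucc) (P i.succ)) ∧
    (∀ i, ∀ A ∈ (P i).parts, degFn G (P i) A ≤ w)

/-- The sparse twin-width of `G`: the least `w` such that `G` can be contracted to a
single vertex by iterated pairwise identifications with all intermediate (quotient)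
graphs of maximum degree at most `w`. -/
def stww (G : SimpleGraph V) : ℕ := sInf {w | SeqOK G quotDeg w}

/-- The twin-width of `G`, via contraction sequences minimizing the maximum red degree. -/
def tww (G : SimpleGraph V) : ℕ := sInf {w | SeqOK G redDeg w}

/-- The quotient graph `G / P`: parts of `P` are adjacent iff some edge of `G` joins them. -/
def quotGraph (G : SimpleGraph V) (P : Finpartition (univ : Finset V)) :
    SimpleGraph {A : Finset V // A ∈ P.parts} :=
  SimpleGraph.fromRel (fun A B => ∃ u ∈ A.1, ∃ v ∈ B.1, G.Adj u v)

end Partitions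

/-- A graph is `w`-degenerate if every nonempty (induced) subgraph has a vertex of
degree at most `w` in it. -/
def Degenerate {W : Type*} (w : ℕ) (H : SimpleGraph W) : Prop :=
  ∀ s : Finset W, s.Nonempty → ∃ a ∈ s, Nat.card {b : W // b ∈ s ∧ H.Adj a b} ≤ w

/-- The graph `Π(r₁,…,r_a; b, q)`: vertices are tuples `(v₁,…,v_a)` with `vᵢ ∈ [q]^{rᵢ}`,
two tuples being adjacent iff (they are distinct and) at least `b` coordinates are
pairwise equal or close. -/
def PiGraph (a b q : ℕ) (rfn : Fin a → ℕ) : SimpleGraph (∀ i : Fin a, Fin (rfn i) → Fin q) :=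
  SimpleGraph.fromRel (fun u v => ∃ I : Finset (Fin a), I.card = b ∧
    ∀ i ∈ I, u i = v i ∨ Close (List.ofFn (u i)) (List.ofFn (v i)))

section AuxColoring
universe u

lemma fiber_count {C L : Type*} [Fintype C] [DecidableEq L] (f : C → L) (S : Finset L) :
    (univ.filter (fun c => f c ∈ S)).card = ∑ x ∈ S, (univ.filter (fun c => f c = x)).card := by
  rw [Finset.card_eq_sum_card_fiberwise (f := f) (t := S) (s := univ.filter (fun c => f c ∈ S)) (fun c hc => (Finset.mem_filter.1 hc).2)]
  refine Finset.sum_congr rfl fun x hx => ?_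
  congr 1
  ext c
  simp only [Finset.mem_filter, Finset.mem_univ, true_and]
  exact ⟨fun h => h.2, fun h => ⟨h ▸ hx, h⟩⟩


lemma exists_pm {C L R : Type*} [Fintype C] [Fintype L] [Fintype R]
    [DecidableEq L] [DecidableEq R]
    (fL : C → L) (fR : C → R) (k : ℕ) (hk : 0 < k)
    (hL : ∀ x, (univ.filter fun c => fL c = x).card = k)
    (hR : ∀ y, (univ.filter fun c => fR c = y).card = k) :
    ∃ m : L → C, (∀ x, fL (m x) = x) ∧ Function.Injective (fR ∘ m) ∧
      Function.Surjective (fR ∘ m) := by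
  classical
  set t : L → Finset R := fun x => (univ.filter fun c => fL c = x).image fR with ht
  have hall : ∀ s : Finset L, s.card ≤ (s.biUnion t).card := by
    intro s
    have h1 : (univ.filter fun c => fL c ∈ s).card = k * s.card := by
      rw [fiber_count, Finset.sum_congr rfl (fun x _ => hL x), Finset.sum_const,
        smul_eq_mul, mul_comm]
    have h2 : (univ.filter fun c => fR c ∈ s.biUnion t).card = k * (s.biUnion t).card := by
      rw [fiber_count, Finset.sum_congr rfl (fun x _ => hR x), Finset.sum_const,
        smul_eq_mul, mul_comm]
    have h3 : (univ.filter fun c => fL c ∈ s) ⊆ (univ.filter fun c => fR c ∈ s.biUnion t) := by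
      intro c hc
      simp only [Finset.mem_filter, Finset.mem_univ, true_and] at hc ⊢
      exact Finset.mem_biUnion.2 ⟨fL c, hc, Finset.mem_image.2 ⟨c, by simp, rfl⟩⟩
    have h4 := Finset.card_le_card h3
    rw [h1, h2] at h4
    exact Nat.le_of_mul_le_mul_left h4 hk
  obtain ⟨g, hginj, hg⟩ := (Finset.all_card_le_biUnion_card_iff_exists_injective t).1 hall
  have hgx : ∀ x, ∃ c, fL c = x ∧ fR c = g x := by
    intro x
    have := hg x
    simp only [ht, Finset.mem_image, Finset.mem_filter, Finset.mem_univ, true_and] at this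
    obtain ⟨c, hc1, hc2⟩ := this
    exact ⟨c, hc1, hc2⟩
  choose m hm1 hm2 using hgx
  have hge : fR ∘ m = g := funext hm2
  have hinj : Function.Injective (fR ∘ m) := hge ▸ hginj
  have hcardL : Fintype.card C = k * Fintype.card L := by
    have := fiber_count fL (univ : Finset L)
    simp only [Finset.mem_univ, Finset.filter_true] at this
    rw [Finset.card_univ] at this
    rw [this, Finset.sum_congr rfl (fun x _ => hL x), Finset.sum_const, smul_eq_mul,
      mul_comm, Finset.card_univ]
  have hcardR : Fintype.card C = k * Fintype.card R := by
    have := fiber_count fR (univ : Finset R)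
    simp only [Finset.mem_univ, Finset.filter_true] at this
    rw [Finset.card_univ] at this
    rw [this, Finset.sum_congr rfl (fun y _ => hR y), Finset.sum_const, smul_eq_mul,
      mul_comm, Finset.card_univ]
  have hcard : Fintype.card L = Fintype.card R :=
    Nat.eq_of_mul_eq_mul_left hk (hcardL ▸ hcardR)
  exact ⟨m, hm1, hinj, ((Fintype.bijective_iff_injective_and_card _).2 ⟨hinj, hcard⟩).2⟩

lemma regular_coloring {L R : Type*} [Fintype L] [Fintype R] [DecidableEq L] [DecidableEq R] :
    ∀ (k : ℕ) {C : Type u} [Fintype C] (fL : C → L) (fR : C → R),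
    (∀ x, (univ.filter fun c => fL c = x).card = k) →
    (∀ y, (univ.filter fun c => fR c = y).card = k) →
    ∃ χ : C → Fin k,
      (∀ c c', χ c = χ c' → fL c = fL c' → c = c') ∧
      (∀ c c', χ c = χ c' → fR c = fR c' → c = c') := by
  intro k
  induction k with
  | zero =>
    intro C _ fL fR hL _
    have hempty : IsEmpty C := by
      constructor
      intro c
      have h0 := hL (fL c)
      rw [Finset.card_eq_zero] at h0
      have hc : c ∈ univ.filter (fun c' => fL c' = fL c) := by simp
      rw [h0] at hc
      exact absurd hc (Finset.notMem_empty c)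
    exact ⟨fun c => (hempty.false c).elim, fun c => (hempty.false c).elim,
      fun c => (hempty.false c).elim⟩
  | succ k ih =>
    intro C _ fL fR hL hR
    classical
    obtain ⟨m, hm1, hm2, hm3⟩ := exists_pm fL fR (k+1) (Nat.succ_pos k) hL hR
    set M : Finset C := univ.image m with hM
    have hmem : ∀ x, m x ∈ M := fun x => Finset.mem_image.2 ⟨x, Finset.mem_univ x, rfl⟩
    -- the subtype of remaining copies
    have hfibL : ∀ x, (univ.filter fun c : {c : C // c ∉ M} => fL c.1 = x).card = k := by
      intro x
      have hbij : (univ.filter fun c : {c : C // c ∉ M} => fL c.1 = x).card =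
          ((univ.filter fun c : C => fL c = x).erase (m x)).card := by
        apply Finset.card_bij (fun c _ => c.1)
        · rintro ⟨c, hc⟩ h
          simp only [Finset.mem_filter, Finset.mem_univ, true_and] at h
          refine Finset.mem_erase.2 ⟨fun heq => hc (by rw [show c = m x from heq]; exact hmem x), ?_⟩
          simp [h]
        · rintro ⟨c, hc⟩ - ⟨c', hc'⟩ - h
          exact Subtype.ext h
        · intro c hc
          rw [Finset.mem_erase, Finset.mem_filter] at hc
          have hcM : c ∉ M := by
            intro hmm
            obtain ⟨x', -, rfl⟩ := Finset.mem_image.1 hmm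
            have hxx : x' = x := by rw [← hm1 x']; exact hc.2.2
            exact hc.1 (congrArg m hxx)
          exact ⟨⟨c, hcM⟩, by simp [hc.2.2], rfl⟩
      rw [hbij, Finset.card_erase_of_mem (by simp [hm1 x]), hL x]
      omega
    have hfibR : ∀ y, (univ.filter fun c : {c : C // c ∉ M} => fR c.1 = y).card = k := by
      intro y
      obtain ⟨x₀, hx₀0⟩ := hm3 y
      have hx₀ : fR (m x₀) = y := hx₀0
      have hbij : (univ.filter fun c : {c : C // c ∉ M} => fR c.1 = y).card =
          ((univ.filter fun c : C => fR c = y).erase (m x₀)).card := by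
        apply Finset.card_bij (fun c _ => c.1)
        · rintro ⟨c, hc⟩ h
          simp only [Finset.mem_filter, Finset.mem_univ, true_and] at h
          refine Finset.mem_erase.2 ⟨fun heq => hc (by rw [show c = m x₀ from heq]; exact hmem x₀), ?_⟩
          simp [h]
        · rintro ⟨c, hc⟩ - ⟨c', hc'⟩ - h
          exact Subtype.ext h
        · intro c hc
          rw [Finset.mem_erase, Finset.mem_filter] at hc
          have hcM : c ∉ M := by
            intro hmm
            obtain ⟨x', -, rfl⟩ := Finset.mem_image.1 hmm
            have hxx : x' = x₀ := hm2 (show fR (m x') = fR (m x₀) by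
              rw [hx₀]; exact hc.2.2)
            exact hc.1 (congrArg m hxx)
          exact ⟨⟨c, hcM⟩, by simp [hc.2.2], rfl⟩
      rw [hbij, Finset.card_erase_of_mem (by simp [hx₀]), hR y]
      omega
    obtain ⟨χ', hp1, hp2⟩ := ih (fun c : {c : C // c ∉ M} => fL c.1)
      (fun c : {c : C // c ∉ M} => fR c.1) hfibL hfibR
    refine ⟨fun c => if h : c ∈ M then Fin.last k else (χ' ⟨c, h⟩).castSucc, ?_, ?_⟩
    · intro c c' hχ hf
      by_cases h : c ∈ M <;> by_cases h' : c' ∈ M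
      · obtain ⟨x, -, rfl⟩ := Finset.mem_image.1 h
        obtain ⟨x', -, rfl⟩ := Finset.mem_image.1 h'
        have : x = x' := by rw [← hm1 x, ← hm1 x', hf]
        rw [this]
      · simp only [dif_pos h, dif_neg h'] at hχ
        exact absurd hχ.symm (Fin.castSucc_lt_last _).ne
      · simp only [dif_neg h, dif_pos h'] at hχ
        exact absurd hχ (Fin.castSucc_lt_last _).ne
      · simp only [dif_neg h, dif_neg h'] at hχ
        have := hp1 ⟨c, h⟩ ⟨c', h'⟩ (Fin.castSucc_inj.1 hχ) hf
        exact congrArg Subtype.val this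
    · intro c c' hχ hf
      by_cases h : c ∈ M <;> by_cases h' : c' ∈ M
      · obtain ⟨x, -, rfl⟩ := Finset.mem_image.1 h
        obtain ⟨x', -, rfl⟩ := Finset.mem_image.1 h'
        have : x = x' := hm2 hf
        rw [this]
      · simp only [dif_pos h, dif_neg h'] at hχ
        exact absurd hχ.symm (Fin.castSucc_lt_last _).ne
      · simp only [dif_neg h, dif_pos h'] at hχ
        exact absurd hχ (Fin.castSucc_lt_last _).ne
      · simp only [dif_neg h, dif_neg h'] at hχ
        have := hp2 ⟨c, h⟩ ⟨c', h'⟩ (Fin.castSucc_inj.1 hχ) hf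
        exact congrArg Subtype.val this

/-- fiber of `Sigma.fst` -/
def sigmaFstFiber {α : Type*} {β : α → Type*} (x : α) :
    {d : Σ a, β a // d.1 = x} ≃ β x where
  toFun d := d.2 ▸ d.1.2
  invFun b := ⟨⟨x, b⟩, rfl⟩
  left_inv := by rintro ⟨⟨a, b⟩, rfl⟩; rfl
  right_inv b := rfl

lemma cardfib {A B : Type*} [Fintype A] [Fintype B] (p : A ⊕ B → Prop) [DecidablePred p] :
    Fintype.card {z : A ⊕ B // p z}
      = Fintype.card {a : A // p (Sum.inl a)} + Fintype.card {b : B // p (Sum.inr b)} := by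
  rw [Fintype.card_congr (Equiv.subtypeSum (p := p)), Fintype.card_sum]

lemma card_sigma_fst_fiber {α : Type*} {n : α → ℕ} [Fintype α] [DecidableEq α] (x : α) :
    Fintype.card {d : Σ a : α, Fin (n a) // d.1 = x} = n x := by
  rw [Fintype.card_congr (sigmaFstFiber x), Fintype.card_fin]

lemma card_false {α : Type*} [Fintype α] {p : α → Prop} [DecidablePred p]
    (h : ∀ a, ¬ p a) : Fintype.card {a : α // p a} = 0 :=
  Fintype.card_eq_zero_iff.2 ⟨fun a => (h a.1 a.2).elim⟩

lemma bounded_coloring {C L R : Type*} [Fintype C] [Fintype L] [Fintype R]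
    [DecidableEq L] [DecidableEq R] (fL : C → L) (fR : C → R) (k : ℕ)
    (hL : ∀ x, (univ.filter fun c => fL c = x).card ≤ k)
    (hR : ∀ y, (univ.filter fun c => fR c = y).card ≤ k) :
    ∃ χ : C → Fin k,
      (∀ c c', χ c = χ c' → fL c = fL c' → c = c') ∧
      (∀ c c', χ c = χ c' → fR c = fR c' → c = c') := by
  classical
  set dL : L → ℕ := fun x => (univ.filter fun c => fL c = x).card with hdL
  set dR : R → ℕ := fun y => (univ.filter fun c => fR c = y).card with hdR
  let C' := (C ⊕ C) ⊕ ((Σ x : L, Fin (k - dL x)) ⊕ (Σ y : R, Fin (k - dR y)))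
  let fL' : C' → L ⊕ R := Sum.elim (Sum.elim (Sum.inl ∘ fL) (Sum.inr ∘ fR))
      (Sum.elim (fun d => Sum.inl d.1) (fun d => Sum.inr d.1))
  let fR' : C' → R ⊕ L := Sum.elim (Sum.elim (Sum.inl ∘ fR) (Sum.inr ∘ fL))
      (Sum.elim (fun d => Sum.inr d.1) (fun d => Sum.inl d.1))
  have hCL : ∀ x : L, Fintype.card {c : C // fL c = x} = dL x :=
    fun x => Fintype.card_subtype _
  have hCR : ∀ y : R, Fintype.card {c : C // fR c = y} = dR y :=
    fun y => Fintype.card_subtype _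
  have hfibL : ∀ z, (univ.filter fun c' : C' => fL' c' = z).card = k := by
    intro z
    rw [← Fintype.card_subtype, cardfib, cardfib, cardfib]
    rcases z with x | y
    · rw [show Fintype.card {c : C // fL' (Sum.inl (Sum.inl c)) = Sum.inl x} = dL x from
        (Fintype.card_congr (Equiv.subtypeEquivRight (fun c => by simp [fL']))).trans (hCL x),
        card_false (fun c => by simp [fL']),
        show Fintype.card {d : Σ x' : L, Fin (k - dL x') //
            fL' (Sum.inr (Sum.inl d)) = Sum.inl x} = k - dL x from
          (Fintype.card_congr (Equiv.subtypeEquivRight (fun d => by simp [fL']))).trans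
            (card_sigma_fst_fiber x),
        card_false (fun d => by simp [fL'])]
      have : dL x ≤ k := hL x
      omega
    · rw [card_false (fun c => by simp [fL']),
        show Fintype.card {c : C // fL' (Sum.inl (Sum.inr c)) = Sum.inr y} = dR y from
          (Fintype.card_congr (Equiv.subtypeEquivRight (fun c => by simp [fL']))).trans (hCR y),
        card_false (fun d => by simp [fL']),
        show Fintype.card {d : Σ y' : R, Fin (k - dR y') //
            fL' (Sum.inr (Sum.inr d)) = Sum.inr y} = k - dR y from
          (Fintype.card_congr (Equiv.subtypeEquivRight (fun d => by simp [fL']))).trans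
            (card_sigma_fst_fiber y)]
      have : dR y ≤ k := hR y
      omega
  have hfibR : ∀ z, (univ.filter fun c' : C' => fR' c' = z).card = k := by
    intro z
    rw [← Fintype.card_subtype, cardfib, cardfib, cardfib]
    rcases z with y | x
    · rw [show Fintype.card {c : C // fR' (Sum.inl (Sum.inl c)) = Sum.inl y} = dR y from
        (Fintype.card_congr (Equiv.subtypeEquivRight (fun c => by simp [fR']))).trans (hCR y),
        card_false (fun c => by simp [fR']),
        card_false (fun d => by simp [fR']),
        show Fintype.card {d : Σ y' : R, Fin (k - dR y') //
            fR' (Sum.inr (Sum.inr d)) = Sum.inl y} = k - dR y from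
          (Fintype.card_congr (Equiv.subtypeEquivRight (fun d => by simp [fR']))).trans
            (card_sigma_fst_fiber y)]
      have : dR y ≤ k := hR y
      omega
    · rw [card_false (fun c => by simp [fR']),
        show Fintype.card {c : C // fR' (Sum.inl (Sum.inr c)) = Sum.inr x} = dL x from
          (Fintype.card_congr (Equiv.subtypeEquivRight (fun c => by simp [fR']))).trans (hCL x),
        show Fintype.card {d : Σ x' : L, Fin (k - dL x') //
            fR' (Sum.inr (Sum.inl d)) = Sum.inr x} = k - dL x from
          (Fintype.card_congr (Equiv.subtypeEquivRight (fun d => by simp [fR']))).trans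
            (card_sigma_fst_fiber x),
        card_false (fun d => by simp [fR'])]
      have : dL x ≤ k := hL x
      omega
  obtain ⟨χ', h1, h2⟩ := regular_coloring k fL' fR' hfibL hfibR
  refine ⟨fun c => χ' (Sum.inl (Sum.inl c)), fun c c' hχ hf => ?_, fun c c' hχ hf => ?_⟩
  · have := h1 _ _ hχ (by simp [fL', hf])
    exact Sum.inl.inj (Sum.inl.inj this)
  · have := h2 _ _ hχ (by simp [fR', hf])
    exact Sum.inl.inj (Sum.inl.inj this)

end AuxColoring

theorem statement_0 {V : Type*} [Fintype V] (G : SimpleGraph V) (a b : ℕ)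
    (hb : 0 < b) (hba : b ≤ a) (hmad : mad G / 2 ≤ (a : ℝ) / b) :
    ∃ H : Fin a → SimpleGraph V,
      (∀ i, H i ≤ G ∧ HasOrientationOutdegLEOne (H i)) ∧
      ∀ e ∈ G.edgeSet, b ≤ Nat.card {i : Fin a // e ∈ (H i).edgeSet} := by
  classical
  have ha : 0 < a := hb.trans_le hba
  -- Step 1: the mad bound, pointwise
  have hmad' : ∀ X : Finset V, X.Nonempty → b * edgesIn G X ≤ a * X.card := by
    intro X hX
    have h0 : ((2 * edgesIn G X : ℝ)) / X.card ≤ mad G :=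
      le_ciSup (f := fun X : {X : Finset V // X.Nonempty} =>
        (2 * edgesIn G X.1 : ℝ) / X.1.card)
        (Set.Finite.bddAbove (Set.finite_range _)) ⟨X, hX⟩
    have hXc : (0:ℝ) < X.card := by exact_mod_cast hX.card_pos
    have hb' : (0:ℝ) < b := by exact_mod_cast hb
    have h1 : ((2 * edgesIn G X : ℝ)) / X.card ≤ 2 * ((a:ℝ) / b) := by linarith
    rw [div_le_iff₀ hXc] at h1
    have h2 : (b : ℝ) * edgesIn G X ≤ a * X.card := by
      have h3 := mul_le_mul_of_nonneg_right h1 hb'.le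
      have h4 : 2 * ((a:ℝ) / b) * X.card * b = 2 * (a * X.card) := by
        field_simp
      rw [h4] at h3
      nlinarith
    exact_mod_cast h2
  -- Step 2: Hall orientation of the b-fold multigraph
  set EE := {e : Sym2 V // e ∈ G.edgeSet} with hEE
  haveI : Fintype EE := Fintype.ofFinite _
  set ends : EE → Finset V := fun e => univ.filter (· ∈ (e.1 : Sym2 V)) with hends
  set t : EE × Fin b → Finset (V × Fin a) := fun p => (ends p.1) ×ˢ univ with htdef
  have hall : ∀ S : Finset (EE × Fin b), S.card ≤ (S.biUnion t).card := by
    intro S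
    rcases S.eq_empty_or_nonempty with rfl | hS
    · simp
    set T : Finset EE := S.image Prod.fst with hT
    set X : Finset V := T.biUnion ends with hX
    have hST : S.biUnion t = X ×ˢ (univ : Finset (Fin a)) := by
      ext q
      rw [Finset.mem_biUnion, Finset.mem_product]
      constructor
      · rintro ⟨p, hp, hq⟩
        simp only [htdef] at hq
        rw [Finset.mem_product] at hq
        exact ⟨Finset.mem_biUnion.2 ⟨p.1, Finset.mem_image.2 ⟨p, hp, rfl⟩, hq.1⟩, hq.2⟩
      · rintro ⟨hq1, hq2⟩
        rw [hX, Finset.mem_biUnion] at hq1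
        obtain ⟨e, heT, hqe⟩ := hq1
        obtain ⟨p, hp, rfl⟩ := Finset.mem_image.1 heT
        refine ⟨p, hp, ?_⟩
        simp only [htdef]
        exact Finset.mem_product.2 ⟨hqe, hq2⟩
    have hXne : X.Nonempty := by
      obtain ⟨p, hp⟩ := hS
      refine ⟨(p.1.1 : Sym2 V).out.1, ?_⟩
      rw [hX]
      exact Finset.mem_biUnion.2 ⟨p.1, Finset.mem_image.2 ⟨p, hp, rfl⟩,
        by simp [hends, Sym2.out_fst_mem]⟩
    have h1 : S.card ≤ T.card * b := by
      have hsub : S ⊆ T ×ˢ (univ : Finset (Fin b)) := by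
        intro p hp
        exact Finset.mem_product.2 ⟨Finset.mem_image.2 ⟨p, hp, rfl⟩, Finset.mem_univ _⟩
      calc S.card ≤ (T ×ˢ (univ : Finset (Fin b))).card := Finset.card_le_card hsub
        _ = T.card * b := by rw [Finset.card_product, Finset.card_univ, Fintype.card_fin]
    have h2 : T.card ≤ edgesIn G X := by
      have : Fintype.card {x // x ∈ T} ≤
          Fintype.card {e : Sym2 V // e ∈ G.edgeSet ∧ ∀ v ∈ e, v ∈ X} := by
        apply Fintype.card_le_of_injective
          (fun ⟨e, he⟩ => ⟨e.1, e.2, fun v hv => Finset.mem_biUnion.2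
            ⟨e, he, by simp [hends, hv]⟩⟩)
        rintro ⟨e, he⟩ ⟨e', he'⟩ h
        simp only [Subtype.mk.injEq] at h
        exact Subtype.ext (Subtype.ext h)
      rw [Fintype.card_coe] at this
      rw [edgesIn, Nat.card_eq_fintype_card]
      exact this
    have h3 : b * edgesIn G X ≤ a * X.card := hmad' X hXne
    rw [hST, Finset.card_product, Finset.card_univ, Fintype.card_fin]
    calc S.card ≤ T.card * b := h1
      _ = b * T.card := mul_comm _ _
      _ ≤ b * edgesIn G X := Nat.mul_le_mul_left _ h2
      _ ≤ a * X.card := h3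
      _ = X.card * a := mul_comm _ _
  obtain ⟨Φ, hΦinj, hΦmem⟩ := (Finset.all_card_le_biUnion_card_iff_exists_injective t).1 hall
  have hΦend : ∀ p : EE × Fin b, (Φ p).1 ∈ (p.1.1 : Sym2 V) := by
    intro p
    have := hΦmem p
    rw [htdef] at this
    simp only [Finset.mem_product, hends, Finset.mem_filter] at this
    exact this.1.2
  -- Step 3: proper coloring of the copies
  have hdegL : ∀ v : V, (univ.filter fun c : EE × Fin b => (Φ c).1 = v).card ≤ a := by
    intro v
    have : (univ.filter fun c : EE × Fin b => (Φ c).1 = v).card ≤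
        (univ : Finset (Fin a)).card := by
      apply Finset.card_le_card_of_injOn (fun c => (Φ c).2) (fun c _ => Finset.mem_univ _)
      intro c hc c' hc' h
      simp only [Finset.mem_coe, Finset.mem_filter] at hc hc'
      exact hΦinj (Prod.ext (hc.2.trans hc'.2.symm) h)
    simpa using this
  have hdegR : ∀ e : EE, (univ.filter fun c : EE × Fin b => c.1 = e).card ≤ a := by
    intro e
    have heq : (univ.filter fun c : EE × Fin b => c.1 = e) = {e} ×ˢ univ := by
      ext ⟨e', j⟩
      simp [eq_comm]
    rw [heq, Finset.card_product, Finset.card_singleton, Finset.card_univ, Fintype.card_fin]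
    simpa using hba
  obtain ⟨χ, hχL, hχR⟩ := bounded_coloring (fun c : EE × Fin b => (Φ c).1) Prod.fst a hdegL hdegR
  -- Step 4: assemble the subgraphs
  set H : Fin a → SimpleGraph V := fun i =>
    SimpleGraph.fromEdgeSet {s | ∃ c : EE × Fin b, χ c = i ∧ (c.1.1 : Sym2 V) = s} with hH
  have hsub : ∀ i, {s | ∃ c : EE × Fin b, χ c = i ∧ (c.1.1 : Sym2 V) = s} ⊆ G.edgeSet := by
    rintro i s ⟨c, -, rfl⟩
    exact c.1.2
  have hEdge : ∀ i, (H i).edgeSet = {s | ∃ c : EE × Fin b, χ c = i ∧ (c.1.1 : Sym2 V) = s} := by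
    intro i
    rw [hH]
    rw [SimpleGraph.edgeSet_fromEdgeSet, _root_.sdiff_eq_self_iff_disjoint, Set.disjoint_left]
    rintro s hd ⟨c, -, rfl⟩
    exact G.not_isDiag_of_mem_edgeSet c.1.2 hd
  refine ⟨H, fun i => ⟨?_, ?_⟩, ?_⟩
  · calc H i ≤ SimpleGraph.fromEdgeSet G.edgeSet := SimpleGraph.fromEdgeSet_mono (hsub i)
      _ = G := SimpleGraph.fromEdgeSet_edgeSet G
  · -- orientation
    have hex : ∀ s, s ∈ (H i).edgeSet → ∃ c : EE × Fin b, χ c = i ∧ (c.1.1 : Sym2 V) = s := by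
      intro s hs
      rw [hEdge i] at hs
      exact hs
    choose cf hc1 hc2 using hex
    refine ⟨fun s => (Φ (cf s.1 s.2)).1, fun s => ?_, fun s s' h => ?_⟩
    · have := hΦend (cf s.1 s.2)
      rw [hc2 s.1 s.2] at this
      exact this
    · have := hχL (cf s.1 s.2) (cf s'.1 s'.2)
        ((hc1 s.1 s.2).trans (hc1 s'.1 s'.2).symm) h
      exact Subtype.ext ((hc2 s.1 s.2).symm.trans (by rw [this, hc2 s'.1 s'.2]))
  · -- coverage
    intro e he
    have hinj : Function.Injective (fun j : Fin b =>
        (⟨χ (⟨e, he⟩, j), by rw [hEdge]; exact ⟨(⟨e, he⟩, j), rfl, rfl⟩⟩ :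
          {i : Fin a // e ∈ (H i).edgeSet})) := by
      intro j j' h
      simp only [Subtype.mk.injEq] at h
      have := hχR (⟨e, he⟩, j) (⟨e, he⟩, j') h rfl
      exact (Prod.ext_iff.1 this).2
    calc b = Nat.card (Fin b) := by simp
      _ ≤ Nat.card {i : Fin a // e ∈ (H i).edgeSet} :=
        Nat.card_le_card_of_injective _ hinj

end TwwPaper
end
end

section
/- Let G be a graph that admits an orientation with maximum outdegree at most one, and let r be a positive integer. Then there exists a set S and a map φ from V(G) to the set of length-r sequences over S with pairwise distinct entries, such that: (1) for every edge uv of G, the sequences φ(u) and φ(v) either are equal or contain a common subsequence of length r−1; and (2) whenever φ(u) and φ(v) share a common element of S, the distance between u and v in G is at most 3r−3. -/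
noncomputable section

namespace TwwPaper

open Finset

variable {V : Type*}

open Classical

private lemma choose_congr {α : Sort*} {p q : α → Prop} (hp : ∃ a, p a) (hq : ∃ a, q a)
    (h : p = q) : hp.choose = hq.choose := by
  subst h; exact congrArg _ (Subsingleton.elim hp hq)

variable {V : Type*} (o : V → Option V)

def traj (u : V) : ℕ → Option V
  | 0 => some u
  | k + 1 => (traj u k).bind o

variable {o}

lemma traj_shift {u v : V} (h : o u = some v) : ∀ k, traj o u (k + 1) = traj o v k := by
  intro k; induction k with
  | zero => show (some u).bind o = some v; simpa using h
  | succ k ih => show (traj o u (k+1)).bind o = (traj o v k).bind o; rw [ih]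

lemma traj_add {u x : V} {k : ℕ} (h : traj o u k = some x) :
    ∀ l, traj o u (k + l) = traj o x l := by
  intro l; induction l with
  | zero => exact h
  | succ l ih =>
      show traj o u (k + l + 1) = _
      show (traj o u (k + l)).bind o = (traj o x l).bind o
      rw [ih]

lemma traj_none_mono {u : V} {k m : ℕ} (h : traj o u k = none) (hkm : k ≤ m) :
    traj o u m = none := by
  obtain ⟨l, rfl⟩ := Nat.exists_eq_add_of_le hkm
  induction l with
  | zero => simpa using h
  | succ l ih =>
      show (traj o u (k + l)).bind o = none
      rw [ih (by omega)]; rfl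

variable (o)

def IsCyc (x : V) : Prop := ∃ c, 0 < c ∧ traj o x c = some x

def per (x : V) : ℕ := sInf {c | 0 < c ∧ traj o x c = some x}

variable {o}

lemma per_pos {x : V} (h : IsCyc o x) : 0 < per o x ∧ traj o x (per o x) = some x :=
  Nat.sInf_mem h

lemma per_le {x : V} {c : ℕ} (h : 0 < c) (hc : traj o x c = some x) : per o x ≤ c :=
  Nat.sInf_le ⟨h, hc⟩

lemma traj_mul_per {x : V} (h : IsCyc o x) : ∀ m, traj o x (m * per o x) = some x := by
  intro m; induction m with
  | zero => simp [traj]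
  | succ m ih => rw [Nat.succ_mul, traj_add ih]; exact (per_pos h).2

lemma traj_some_of_cyc {x : V} (h : IsCyc o x) (k : ℕ) : ∃ y, traj o x k = some y := by
  rcases he : traj o x k with _ | y
  · exfalso
    have h1 : k ≤ k * per o x := Nat.le_mul_of_pos_right _ (per_pos h).1
    have := traj_none_mono he h1
    rw [traj_mul_per h k] at this; cases this
  · exact ⟨y, rfl⟩

lemma traj_mod {x : V} (h : IsCyc o x) (k : ℕ) : traj o x k = traj o x (k % per o x) := by
  conv_lhs => rw [show k = k / per o x * per o x + k % per o x from (Nat.div_add_mod' k _).symm]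
  rw [traj_add (traj_mul_per h _)]

variable (o)

def orbit (x : V) : Set V := {y | ∃ k, traj o x k = some y}

variable {o}

lemma self_mem_orbit (x : V) : x ∈ orbit o x := ⟨0, rfl⟩

lemma orbit_trans {x y z : V} (hy : y ∈ orbit o x) (hz : z ∈ orbit o y) : z ∈ orbit o x := by
  obtain ⟨k, hk⟩ := hy; obtain ⟨l, hl⟩ := hz
  exact ⟨k + l, by rw [traj_add hk]; exact hl⟩

lemma mem_orbit_rev {x y : V} (h : IsCyc o x) (hy : y ∈ orbit o x) : x ∈ orbit o y := by
  obtain ⟨k, hk⟩ := hy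
  have hle : k ≤ k * per o x := Nat.le_mul_of_pos_right _ (per_pos h).1
  refine ⟨k * per o x - k, ?_⟩
  have h2 := traj_add hk (k * per o x - k)
  rw [Nat.add_sub_cancel' hle] at h2
  rw [← h2]; exact traj_mul_per h k

lemma cyc_orbit {x y : V} (h : IsCyc o x) (hy : y ∈ orbit o x) :
    traj o y (per o x) = some y := by
  obtain ⟨k, hk⟩ := hy
  have h1 : traj o x (per o x + k) = some y := by rw [traj_add (per_pos h).2]; exact hk
  have h2 : traj o x (k + per o x) = traj o y (per o x) := traj_add hk _
  rw [Nat.add_comm] at h1; rw [h1] at h2; exact h2.symm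

lemma isCyc_orbit {x y : V} (h : IsCyc o x) (hy : y ∈ orbit o x) : IsCyc o y :=
  ⟨per o x, (per_pos h).1, cyc_orbit h hy⟩

lemma per_orbit {x y : V} (h : IsCyc o x) (hy : y ∈ orbit o x) : per o y = per o x := by
  have h1 : per o y ≤ per o x := per_le (per_pos h).1 (cyc_orbit h hy)
  have hyc : IsCyc o y := isCyc_orbit h hy
  have h2 : per o x ≤ per o y := per_le (per_pos hyc).1 (cyc_orbit hyc (mem_orbit_rev h hy))
  omega

lemma orbit_eq {x y : V} (h : IsCyc o x) (hy : y ∈ orbit o x) : orbit o y = orbit o x :=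
  Set.ext fun _ => ⟨fun hz => orbit_trans hy hz, fun hz => orbit_trans (mem_orbit_rev h hy) hz⟩

lemma orbit_small {x y : V} (h : IsCyc o x) (hy : y ∈ orbit o x) :
    ∃ k < per o x, traj o x k = some y := by
  obtain ⟨K, hK⟩ := hy
  exact ⟨K % per o x, Nat.mod_lt _ (per_pos h).1, by rw [← traj_mod h]; exact hK⟩

lemma traj_inj {x : V} {m m' : ℕ} (h : IsCyc o x) (hm : m < m') (hm' : m' < per o x)
    (he : traj o x m = traj o x m') : False := by
  obtain ⟨y, hy⟩ := traj_some_of_cyc h m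
  have h2 : traj o x m' = some y := by rw [← he]; exact hy
  have h3 : traj o y (m' - m) = some y := by
    have := traj_add hy (m' - m)
    rw [Nat.add_sub_cancel' hm.le] at this
    rw [← this]; exact h2
  have h4 : per o y ≤ m' - m := per_le (by omega) h3
  have h5 : per o y = per o x := per_orbit h ⟨m, hy⟩
  omega


section Stream

variable (o) (r : ℕ)

/-- `x` lies on a cycle of length `< r`. -/
def SC (x : V) : Prop := IsCyc o x ∧ per o x < r

def base (x : V) : V := (⟨x, self_mem_orbit x⟩ : ∃ y, y ∈ orbit o x).choose

def death (u : V) : ℕ := sInf {k | traj o u k = none}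

def entry (u : V) : ℕ := sInf {k | ∃ x, traj o u k = some x ∧ SC o r x}

def dv (u : V) : V := (traj o u (death o u - 1)).getD u

def cycTok (b : V) (m : ℕ) : V ⊕ (V × ℕ) :=
  if m < per o b then (traj o b m).elim (Sum.inr (b, m)) Sum.inl else Sum.inr (b, m)

def stream (u : V) (k : ℕ) : V ⊕ (V × ℕ) :=
  (traj o u k).elim (Sum.inr (dv o u, k - death o u))
    (fun x => if SC o r x then cycTok o (base o x) (k - entry o r u) else Sum.inl x)

variable {o} {r}

lemma base_mem (x : V) : base o x ∈ orbit o x := Exists.choose_spec _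

lemma base_congr {x y : V} (h : orbit o x = orbit o y) : base o x = base o y :=
  choose_congr _ _ (by funext z; rw [h])


lemma stream_none {u : V} {k : ℕ} (h : traj o u k = none) :
    stream o r u k = Sum.inr (dv o u, k - death o u) := by
  simp [stream, h]

lemma stream_some {u : V} {k : ℕ} {x : V} (h : traj o u k = some x) :
    stream o r u k =
      if SC o r x then cycTok o (base o x) (k - entry o r u) else Sum.inl x := by
  simp [stream, h]

lemma death_le {u : V} {k : ℕ} (h : traj o u k = none) : death o u ≤ k := Nat.sInf_le h

lemma death_spec {u : V} {k : ℕ} (h : traj o u k = none) :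
    0 < death o u ∧ traj o u (death o u) = none ∧ traj o u (death o u - 1) = some (dv o u) := by
  have hmem : traj o u (death o u) = none := Nat.sInf_mem (⟨k, h⟩ : Set.Nonempty {k | traj o u k = none})
  have hpos : 0 < death o u := by
    rcases Nat.eq_zero_or_pos (death o u) with h0 | h0
    · rw [h0] at hmem; exact absurd hmem (by simp [traj])
    · exact h0
  have hlt : death o u - 1 < death o u := by omega
  have hns := Nat.notMem_of_lt_sInf hlt
  rcases hs : traj o u (death o u - 1) with _ | s
  · exact absurd hs hns
  · exact ⟨hpos, hmem, by rw [dv, hs]; rfl⟩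

lemma entry_le {u : V} {k : ℕ} (h : ∃ x, traj o u k = some x ∧ SC o r x) :
    entry o r u ≤ k := Nat.sInf_le h

lemma entry_mem {u : V} {k : ℕ} (h : ∃ x, traj o u k = some x ∧ SC o r x) :
    ∃ x, traj o u (entry o r u) = some x ∧ SC o r x :=
  Nat.sInf_mem (⟨k, h⟩ : Set.Nonempty {k | ∃ x, traj o u k = some x ∧ SC o r x})

lemma entry_zero {u : V} (h : SC o r u) : entry o r u = 0 :=
  Nat.le_zero.mp (entry_le ⟨u, rfl, h⟩)

lemma death_shift {u v : V} {k : ℕ} (hv : o u = some v) (h : traj o u k = none) :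
    death o u = death o v + 1 ∧ dv o u = dv o v := by
  have hk0 : k ≠ 0 := by rintro rfl; exact absurd h (by simp [traj])
  have hvk : traj o v (k - 1) = none := by
    rw [← traj_shift hv, Nat.sub_add_cancel (by omega)]; exact h
  obtain ⟨hupos, hunone, hus⟩ := death_spec h
  obtain ⟨hvpos, hvnone, hvs⟩ := death_spec hvk
  have h1 : death o u ≤ death o v + 1 := death_le (by rw [traj_shift hv]; exact hvnone)
  have h2 : death o v ≤ death o u - 1 := death_le (by
    rw [← traj_shift hv, Nat.sub_add_cancel hupos]; exact hunone)
  have heq : death o u = death o v + 1 := by omega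
  refine ⟨heq, ?_⟩
  have h3 : traj o u (death o u - 1) = some (dv o v) := by
    rw [heq, Nat.add_sub_cancel, show death o v = (death o v - 1) + 1 by omega,
      traj_shift hv]
    exact hvs
  rw [h3] at hus; exact (Option.some.inj hus).symm

lemma entry_shift {u v : V} {k : ℕ} (hv : o u = some v) (hu : ¬ SC o r u)
    (h : ∃ x, traj o v k = some x ∧ SC o r x) : entry o r u = entry o r v + 1 := by
  have hupos : 0 < entry o r u := by
    have h1 : ∃ x, traj o u (k + 1) = some x ∧ SC o r x := by
      rw [traj_shift hv]; exact h
    obtain ⟨x, hx, hscx⟩ := entry_mem h1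
    rcases Nat.eq_zero_or_pos (entry o r u) with h0 | h0
    · rw [h0] at hx
      exact absurd (show SC o r u by cases (Option.some.inj hx); exact hscx) hu
    · exact h0
  have h1 : ∃ x, traj o u (k + 1) = some x ∧ SC o r x := by rw [traj_shift hv]; exact h
  obtain ⟨xv, hxv, hscv⟩ := entry_mem h
  have hle1 : entry o r u ≤ entry o r v + 1 :=
    entry_le ⟨xv, by rw [traj_shift hv]; exact hxv, hscv⟩
  obtain ⟨xu, hxu, hscu⟩ := entry_mem h1
  have hle2 : entry o r v ≤ entry o r u - 1 :=
    entry_le ⟨xu, by rw [← traj_shift hv, Nat.sub_add_cancel hupos]; exact hxu, hscu⟩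
  omega

lemma sc_next {u v : V} (hv : o u = some v) (hu : SC o r u) :
    SC o r v ∧ orbit o v = orbit o u := by
  have hvo : v ∈ orbit o u := ⟨1, by rw [show (1:ℕ) = 0 + 1 from rfl, traj_shift hv]; rfl⟩
  exact ⟨⟨isCyc_orbit hu.1 hvo, (per_orbit hu.1 hvo) ▸ hu.2⟩, orbit_eq hu.1 hvo⟩

lemma stream_shift {u v : V} (hv : o u = some v) (hu : ¬ SC o r u) (k : ℕ) :
    stream o r u (k + 1) = stream o r v k := by
  rcases hvk : traj o v k with _ | x
  · have huk : traj o u (k + 1) = none := by rw [traj_shift hv]; exact hvk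
    rw [stream_none huk, stream_none hvk]
    obtain ⟨hd, hdv⟩ := death_shift hv huk
    rw [hd, hdv, Nat.succ_sub_succ]
  · have huk : traj o u (k + 1) = some x := by rw [traj_shift hv]; exact hvk
    rw [stream_some huk, stream_some hvk]
    by_cases hx : SC o r x
    · rw [if_pos hx, if_pos hx, entry_shift hv hu ⟨x, hvk, hx⟩, Nat.succ_sub_succ]
    · rw [if_neg hx, if_neg hx]

lemma stream_const {u v : V} (hv : o u = some v) (hu : SC o r u) (k : ℕ) :
    stream o r u k = stream o r v k := by
  obtain ⟨hscv, horb⟩ := sc_next hv hu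
  obtain ⟨x, hx⟩ := traj_some_of_cyc hu.1 k
  obtain ⟨y, hy⟩ := traj_some_of_cyc hscv.1 k
  have hxo : x ∈ orbit o u := ⟨k, hx⟩
  have hyo : y ∈ orbit o v := ⟨k, hy⟩
  have hscx : SC o r x := ⟨isCyc_orbit hu.1 hxo, (per_orbit hu.1 hxo) ▸ hu.2⟩
  have hscy : SC o r y := ⟨isCyc_orbit hscv.1 hyo, (per_orbit hscv.1 hyo) ▸ hscv.2⟩
  rw [stream_some hx, stream_some hy, if_pos hscx, if_pos hscy,
    entry_zero hu, entry_zero hscv,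
    base_congr (orbit_eq hu.1 hxo), base_congr ((orbit_eq hscv.1 hyo).trans horb)]

end Stream


section Main

variable {V : Type*} {o : V → Option V} {r : ℕ}

lemma cycTok_inr {b b' : V} {m m' : ℕ} (h : cycTok o b m = Sum.inr (b', m')) :
    b' = b ∧ m' = m := by
  unfold cycTok at h
  by_cases h1 : m < per o b
  · rw [if_pos h1] at h
    rcases ht : traj o b m with _ | z
    · rw [ht] at h; simp at h; exact ⟨h.1.symm, h.2.symm⟩
    · rw [ht] at h; simp at h
  · rw [if_neg h1] at h; simp at h; exact ⟨h.1.symm, h.2.symm⟩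

lemma cycTok_inl {b z : V} {m : ℕ} (hb : IsCyc o b) (h : cycTok o b m = Sum.inl z) :
    z ∈ orbit o b := by
  unfold cycTok at h
  by_cases h1 : m < per o b
  · rw [if_pos h1] at h
    obtain ⟨y, hy⟩ := traj_some_of_cyc hb m
    rw [hy] at h; simp at h; exact ⟨m, by rw [hy, h]⟩
  · rw [if_neg h1] at h; simp at h

lemma cycTok_inj {b : V} {m m' : ℕ} (hb : IsCyc o b) (h : cycTok o b m = cycTok o b m') :
    m = m' := by
  by_contra hne
  unfold cycTok at h
  obtain ⟨z, hz⟩ := traj_some_of_cyc hb m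
  obtain ⟨z', hz'⟩ := traj_some_of_cyc hb m'
  by_cases h1 : m < per o b <;> by_cases h2 : m' < per o b
  · rw [if_pos h1, if_pos h2, hz, hz'] at h
    simp only [Option.elim_some, Sum.inl.injEq] at h
    rcases Nat.lt_trichotomy m m' with hlt | heq | hgt
    · exact traj_inj hb hlt h2 (hz.trans (by rw [h, ← hz']))
    · exact hne heq
    · exact traj_inj hb hgt h1 (hz'.trans (by rw [← h, ← hz]))
  · rw [if_pos h1, if_neg h2, hz] at h; simp at h
  · rw [if_neg h1, if_pos h2, hz'] at h; simp at h
  · rw [if_neg h1, if_neg h2] at h; simp at h; omega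

lemma cycTok_orbit {b b' : V} {m m' : ℕ} (hb : IsCyc o b) (hb' : IsCyc o b')
    (h : cycTok o b m = cycTok o b' m') : orbit o b = orbit o b' := by
  rcases he : cycTok o b m with z | p
  · rw [he] at h
    have h1 : z ∈ orbit o b := cycTok_inl hb he
    have h2 : z ∈ orbit o b' := cycTok_inl hb' h.symm
    rw [← orbit_eq hb h1, ← orbit_eq hb' h2]
  · rw [he] at h
    obtain ⟨hb1, -⟩ := cycTok_inr he
    obtain ⟨hb2, -⟩ := cycTok_inr h.symm
    rw [← hb1, hb2]

lemma sc_of_orbit {x y : V} (hx : SC o r x) (hy : y ∈ orbit o x) : SC o r y :=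
  ⟨isCyc_orbit hx.1 hy, (per_orbit hx.1 hy) ▸ hx.2⟩

lemma base_isCyc {x : V} (hx : IsCyc o x) : IsCyc o (base o x) :=
  isCyc_orbit hx (base_mem x)

lemma dv_not_cyc {u : V} {k : ℕ} (h : traj o u k = none) : ¬ IsCyc o (dv o u) := by
  obtain ⟨hpos, hnone, hs⟩ := death_spec h
  have ho : o (dv o u) = none := by
    have h1 : traj o u (death o u - 1 + 1) = (traj o u (death o u - 1)).bind o := rfl
    rw [Nat.sub_add_cancel hpos, hnone, hs] at h1
    exact h1.symm
  intro hc
  obtain ⟨y, hy⟩ := traj_some_of_cyc hc 1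
  have : traj o (dv o u) 1 = none := by
    show (some (dv o u)).bind o = none
    simpa using ho
  rw [hy] at this; cases this

/-- Distinctness of the tokens in one stream. -/
lemma stream_inj {u : V} {k l : ℕ} (hkl : k < l) (hl : l < r)
    (he : stream o r u k = stream o r u l) : False := by
  rcases hk : traj o u k with _ | x
  · have hln : traj o u l = none := traj_none_mono hk hkl.le
    rw [stream_none hk, stream_none hln] at he
    simp only [Sum.inr.injEq, Prod.mk.injEq] at he
    have hd := death_le hk
    omega
  · rcases hl' : traj o u l with _ | y
    · rw [stream_some hk, stream_none hl'] at he
      by_cases hx : SC o r x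
      · have := traj_add hk (l - k)
        rw [Nat.add_sub_cancel' hkl.le, hl'] at this
        obtain ⟨z, hz⟩ := traj_some_of_cyc hx.1 (l - k)
        rw [hz] at this; cases this
      · rw [if_neg hx] at he; simp at he
    · have hyx : y ∈ orbit o x := ⟨l - k, by
        rw [← traj_add hk, Nat.add_sub_cancel' hkl.le]; exact hl'⟩
      rw [stream_some hk, stream_some hl'] at he
      by_cases hx : SC o r x <;> by_cases hy : SC o r y
      · rw [if_pos hx, if_pos hy, base_congr (orbit_eq hx.1 hyx)] at he
        have heq := cycTok_inj (base_isCyc hx.1) he.symm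
        have hek : entry o r u ≤ k := entry_le ⟨x, hk, hx⟩
        omega
      · exact hy (sc_of_orbit hx hyx)
      · rw [if_neg hx, if_pos hy] at he
        have hxo : x ∈ orbit o (base o y) := cycTok_inl (base_isCyc hy.1) he.symm
        exact hx (sc_of_orbit (sc_of_orbit hy (base_mem y)) hxo)
      · rw [if_neg hx, if_neg hy] at he
        simp only [Sum.inl.injEq] at he
        subst he
        have h3 : traj o x (l - k) = some x := by
          rw [← traj_add hk, Nat.add_sub_cancel' hkl.le]; exact hl'
        have hc : IsCyc o x := ⟨l - k, by omega, h3⟩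
        exact hx ⟨hc, by
          have := per_le (show 0 < l - k by omega) h3
          omega⟩

variable {G : SimpleGraph V}

lemma traj_walk (hA : ∀ a b, o a = some b → G.Adj a b) {u x : V} {k : ℕ}
    (h : traj o u k = some x) : ∃ p : G.Walk u x, p.length ≤ k := by
  induction k generalizing x with
  | zero =>
      cases Option.some.inj h
      exact ⟨SimpleGraph.Walk.nil, by simp⟩
  | succ k ih =>
      rcases Option.bind_eq_some_iff.mp h with ⟨y, hy, hoy⟩
      obtain ⟨p, hp⟩ := ih hy
      exact ⟨p.concat (hA _ _ hoy), by rw [SimpleGraph.Walk.length_concat]; omega⟩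

lemma walk_glue {u w x : V} {a b n : ℕ} (p : G.Walk u x) (q : G.Walk w x)
    (hp : p.length ≤ a) (hq : q.length ≤ b) (hab : a + b ≤ n) :
    G.Reachable u w ∧ G.dist u w ≤ n := by
  refine ⟨⟨p.append q.reverse⟩, le_trans (SimpleGraph.dist_le (p.append q.reverse)) ?_⟩
  rw [SimpleGraph.Walk.length_append, SimpleGraph.Walk.length_reverse]
  omega

lemma walk_glue3 {u w x y : V} {a b c n : ℕ} (p : G.Walk u x) (m : G.Walk x y)
    (q : G.Walk w y) (hp : p.length ≤ a) (hm : m.length ≤ b) (hq : q.length ≤ c)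
    (hab : a + b + c ≤ n) : G.Reachable u w ∧ G.dist u w ≤ n := by
  refine ⟨⟨(p.append m).append q.reverse⟩,
    le_trans (SimpleGraph.dist_le ((p.append m).append q.reverse)) ?_⟩
  rw [SimpleGraph.Walk.length_append, SimpleGraph.Walk.length_append,
    SimpleGraph.Walk.length_reverse]
  omega

/-- Shared token implies short distance. -/
lemma stream_shared (hA : ∀ a b, o a = some b → G.Adj a b) {u w : V} {k l : ℕ}
    (hk : k < r) (hl : l < r) (he : stream o r u k = stream o r w l) :
    G.Reachable u w ∧ G.dist u w ≤ 3 * r - 3 := by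
  rcases hku : traj o u k with _ | x <;> rcases hlw : traj o w l with _ | y
  · -- both dead
    rw [stream_none hku, stream_none hlw] at he
    simp only [Sum.inr.injEq, Prod.mk.injEq] at he
    obtain ⟨hupos, -, hus⟩ := death_spec hku
    obtain ⟨hwpos, -, hws⟩ := death_spec hlw
    rw [he.1] at hus
    obtain ⟨p, hp⟩ := traj_walk hA hus
    obtain ⟨q, hq⟩ := traj_walk hA hws
    have hdu := death_le hku
    have hdw := death_le hlw
    exact walk_glue p q hp hq (by omega)
  · -- u dead, w alive
    rw [stream_none hku, stream_some hlw] at he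
    by_cases hy : SC o r y
    · rw [if_pos hy] at he
      obtain ⟨hb, -⟩ := cycTok_inr he.symm
      exact absurd (hb ▸ base_isCyc hy.1) (dv_not_cyc hku)
    · rw [if_neg hy] at he; simp at he
  · -- u alive, w dead
    rw [stream_some hku, stream_none hlw] at he
    by_cases hx : SC o r x
    · rw [if_pos hx] at he
      obtain ⟨hb, -⟩ := cycTok_inr he
      exact absurd (hb ▸ base_isCyc hx.1) (dv_not_cyc hlw)
    · rw [if_neg hx] at he; simp at he
  · -- both alive
    rw [stream_some hku, stream_some hlw] at he
    by_cases hx : SC o r x <;> by_cases hy : SC o r y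
    · -- both on short cycles
      rw [if_pos hx, if_pos hy] at he
      obtain ⟨xu, hxu, hscu⟩ := entry_mem ⟨x, hku, hx⟩
      obtain ⟨xw, hxw, hscw⟩ := entry_mem ⟨y, hlw, hy⟩
      have heu : entry o r u ≤ k := entry_le ⟨x, hku, hx⟩
      have hew : entry o r w ≤ l := entry_le ⟨y, hlw, hy⟩
      -- x ∈ orbit xu, y ∈ orbit xw
      have hxou : x ∈ orbit o xu := ⟨k - entry o r u, by
        rw [← traj_add hxu, Nat.add_sub_cancel' heu]; exact hku⟩
      have hyow : y ∈ orbit o xw := ⟨l - entry o r w, by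
        rw [← traj_add hxw, Nat.add_sub_cancel' hew]; exact hlw⟩
      have horb : orbit o (base o x) = orbit o (base o y) :=
        cycTok_orbit (base_isCyc hx.1) (base_isCyc hy.1) he
      have h1 : orbit o xu = orbit o xw := by
        rw [← orbit_eq hscu.1 hxou, ← orbit_eq hx.1 (base_mem x),
          ← orbit_eq hscw.1 hyow, ← orbit_eq hy.1 (base_mem y)]
        exact horb
      have hxw_mem : xw ∈ orbit o xu := h1 ▸ self_mem_orbit xw
      obtain ⟨j, hj, hjw⟩ := orbit_small hscu.1 hxw_mem
      obtain ⟨p, hp⟩ := traj_walk hA hxu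
      obtain ⟨m, hm⟩ := traj_walk hA hjw
      obtain ⟨q, hq⟩ := traj_walk hA hxw
      have hper : per o xu < r := hscu.2
      refine walk_glue3 p m q (le_trans hp heu) hm (le_trans hq hew) ?_
      omega
    · rw [if_pos hx, if_neg hy] at he
      exact absurd (sc_of_orbit (sc_of_orbit hx (base_mem x))
        (cycTok_inl (base_isCyc hx.1) he)) hy
    · rw [if_neg hx, if_pos hy] at he
      exact absurd (sc_of_orbit (sc_of_orbit hy (base_mem y))
        (cycTok_inl (base_isCyc hy.1) he.symm)) hx
    · rw [if_neg hx, if_neg hy] at he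
      simp only [Sum.inl.injEq] at he
      subst he
      obtain ⟨p, hp⟩ := traj_walk hA hku
      obtain ⟨q, hq⟩ := traj_walk hA hlw
      exact walk_glue p q hp hq (by omega)

end Main


section Assembly

open Classical

variable {V : Type} [Fintype V] {G : SimpleGraph V}

lemma close_symm {S : Type*} {L M : List S} (h : Close L M) : Close M L := by
  obtain ⟨i, hi, j, hj, h⟩ := h
  exact ⟨j, hj, i, hi, h.symm⟩

lemma orientation_fun (hG : HasOrientationOutdegLEOne G) :
    ∃ o : V → Option V, (∀ a b, o a = some b → G.Adj a b) ∧
      (∀ a b, G.Adj a b → o a = some b ∨ o b = some a) := by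
  obtain ⟨f, hmem, hinj⟩ := hG
  have key : ∀ (a v : V), (∃ e : G.edgeSet, f e = a ∧ (e : Sym2 V) = s(a, v)) → G.Adj a v := by
    rintro a v ⟨e, -, he⟩
    have := e.2
    rw [he] at this
    exact this
  refine ⟨fun u => if h : ∃ v, ∃ e : G.edgeSet, f e = u ∧ (e : Sym2 V) = s(u, v) then
      some h.choose else none, ?_, ?_⟩
  · intro a b hab
    by_cases h : ∃ v, ∃ e : G.edgeSet, f e = a ∧ (e : Sym2 V) = s(a, v)
    · simp only [dif_pos h] at hab
      rw [← Option.some.inj hab]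
      exact key a h.choose h.choose_spec
    · simp only [dif_neg h] at hab
      cases hab
  · intro a b hab
    have hne : a ≠ b := G.ne_of_adj hab
    set e : G.edgeSet := ⟨s(a, b), hab⟩ with hedef
    have hfe : f e ∈ (e : Sym2 V) := hmem e
    rcases Sym2.mem_iff.mp hfe with hfa | hfb
    · left
      have h : ∃ v, ∃ e' : G.edgeSet, f e' = a ∧ (e' : Sym2 V) = s(a, v) := ⟨b, e, hfa, rfl⟩
      simp only [dif_pos h]
      obtain ⟨e', hfe', hee'⟩ := h.choose_spec
      have : e' = e := hinj (hfe'.trans hfa.symm)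
      rw [this] at hee'
      have : s(a, h.choose) = s(a, b) := hee'.symm
      rw [Sym2.congr_right.mp this]
    · right
      have h : ∃ v, ∃ e' : G.edgeSet, f e' = b ∧ (e' : Sym2 V) = s(b, v) := ⟨a, e, hfb, Sym2.eq_swap⟩
      simp only [dif_pos h]
      obtain ⟨e', hfe', hee'⟩ := h.choose_spec
      have : e' = e := hinj (hfe'.trans hfb.symm)
      rw [this] at hee'
      have : s(b, h.choose) = s(a, b) := hee'.symm
      rw [Sym2.congr_right.mp (this.trans Sym2.eq_swap)]

end Assembly

theorem statement_2 {V : Type} [Fintype V] (G : SimpleGraph V)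
    (hG : HasOrientationOutdegLEOne G) (r : ℕ) (hr : 0 < r) :
    ∃ (S : Type) (φ : V → List S),
      (∀ v, (φ v).length = r ∧ (φ v).Nodup) ∧
      (∀ u v, G.Adj u v → φ u = φ v ∨ Close (φ u) (φ v)) ∧
      (∀ u v : V, ∀ x : S, x ∈ φ u → x ∈ φ v →
        G.Reachable u v ∧ G.dist u v ≤ 3 * r - 3) := by
  classical
  obtain ⟨o, ho_adj, ho_total⟩ := orientation_fun hG
  set φ : V → List (V ⊕ (V × ℕ)) := fun u => List.ofFn (fun k : Fin r => stream o r u k) with hφ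
  have hlen : ∀ u, (φ u).length = r := fun u => List.length_ofFn
  have key : ∀ u v, o u = some v → φ u = φ v ∨ Close (φ u) (φ v) := by
    intro u v hv
    by_cases hu : SC o r u
    · exact Or.inl (congrArg List.ofFn (funext fun k => stream_const hv hu k))
    · right
      obtain ⟨m, hm⟩ : ∃ m, r = m + 1 := ⟨r - 1, by omega⟩
      subst hm
      refine ⟨0, by rw [hlen]; omega, m, by rw [hlen]; omega, ?_⟩
      have h1 : (φ u).eraseIdx 0 = List.ofFn (fun i : Fin m => stream o (m+1) u (i.1 + 1)) := by
        rw [hφ]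
        simp only [List.ofFn_succ, List.eraseIdx_cons_zero]
        congr 1
      have h2 : (φ v).eraseIdx m = List.ofFn (fun i : Fin m => stream o (m+1) v i.1) := by
        rw [hφ]
        simp only [List.ofFn_succ']
        rw [← List.dropLast_eq_eraseIdx (by simp), List.concat_eq_append, List.dropLast_concat]
        congr 1
      rw [h1, h2]
      exact congrArg List.ofFn (funext fun i => stream_shift hv hu i.1)
  refine ⟨V ⊕ (V × ℕ), φ, ?_, ?_, ?_⟩
  · intro u
    refine ⟨hlen u, List.nodup_ofFn.mpr ?_⟩
    intro a b hab
    by_contra hne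
    rcases Nat.lt_trichotomy a.1 b.1 with hlt | heq | hgt
    · exact stream_inj hlt b.2 hab
    · exact hne (Fin.ext heq)
    · exact stream_inj hgt a.2 hab.symm
  · intro u v hadj
    rcases ho_total u v hadj with h | h
    · exact key u v h
    · rcases key v u h with he | hc
      · exact Or.inl he.symm
      · exact Or.inr (close_symm hc)
  · intro u v x hxu hxv
    rw [hφ, List.mem_ofFn] at hxu hxv
    obtain ⟨k, hk⟩ := hxu
    obtain ⟨l, hl⟩ := hxv
    exact stream_shared ho_adj k.2 l.2 (hk.trans hl.symm)

end TwwPaper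
end
end

section
/- If G and H are graphs and φ : V(G) → V(H) is a map such that for every edge uv of G either φ(u)φ(v) is an edge of H or φ(u) = φ(v), then stww(G) ≤ max{stww(H), m·Δ(G)}, where m = max over v ∈ V(H) of |φ⁻¹(v)|. -/
noncomputable section

namespace TwwPaper

open Finset

variable {V : Type*}

section AuxStww

variable [Fintype V] [DecidableEq V]

lemma quotDeg_le_card_parts (G : SimpleGraph V) (P : Finpartition (univ : Finset V))
    (A : Finset V) : quotDeg G P A ≤ P.parts.card := by
  have h1 : Nat.card {B : Finset V // B ∈ P.parts} = P.parts.card := by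
    rw [Nat.card_eq_fintype_card, Fintype.card_coe]
  refine le_trans (Nat.card_le_card_of_injective
      (fun x : {B : Finset V // B ∈ P.parts ∧ B ≠ A ∧ ∃ u ∈ A, ∃ v ∈ B, G.Adj u v} =>
        (⟨x.1, x.2.1⟩ : {B : Finset V // B ∈ P.parts})) ?_) h1.le
  intro a b h
  exact Subtype.ext (Subtype.mk_eq_mk.1 h)

/-- Merging two parts of a finpartition. -/
def mergeP (P : Finpartition (univ : Finset V)) (A B : Finset V)
    (hA : A ∈ P.parts) (hB : B ∈ P.parts) (hAB : A ≠ B) : Finpartition (univ : Finset V) where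
  parts := insert (A ∪ B) ((P.parts.erase A).erase B)
  supIndep := by
    rw [Finset.supIndep_iff_pairwiseDisjoint]
    intro X hX Y hY hXY
    simp only [coe_insert, Set.mem_insert_iff, mem_coe, mem_erase] at hX hY
    have hd := P.disjoint
    rcases hX with rfl | ⟨hXB, hXA, hX⟩
    · rcases hY with rfl | ⟨hYB, hYA, hY⟩
      · exact absurd rfl hXY
      · exact Finset.disjoint_union_left.2
          ⟨hd (mem_coe.2 hA) (mem_coe.2 hY) (Ne.symm hYA),
           hd (mem_coe.2 hB) (mem_coe.2 hY) (Ne.symm hYB)⟩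
    · rcases hY with rfl | ⟨hYB, hYA, hY⟩
      · exact Finset.disjoint_union_right.2
          ⟨hd (mem_coe.2 hX) (mem_coe.2 hA) hXA, hd (mem_coe.2 hX) (mem_coe.2 hB) hXB⟩
      · exact hd (mem_coe.2 hX) (mem_coe.2 hY) hXY
  sup_parts := by
    apply le_antisymm (Finset.sup_le fun X _ => Finset.subset_univ X)
    intro v _
    obtain ⟨C, hC, hvC⟩ := P.exists_mem (mem_univ v)
    by_cases hCA : C = A
    · exact Finset.mem_sup.2 ⟨A ∪ B, mem_insert_self _ _, mem_union_left _ (hCA ▸ hvC)⟩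
    by_cases hCB : C = B
    · exact Finset.mem_sup.2 ⟨A ∪ B, mem_insert_self _ _, mem_union_right _ (hCB ▸ hvC)⟩
    · exact Finset.mem_sup.2 ⟨C, mem_insert_of_mem (mem_erase.2 ⟨hCB, mem_erase.2 ⟨hCA, hC⟩⟩), hvC⟩
  bot_notMem := by
    simp only [Finset.bot_eq_empty, mem_insert, mem_erase, not_or]
    refine ⟨fun h => ?_, fun h => P.bot_notMem (Finset.bot_eq_empty ▸ h.2.2)⟩
    obtain ⟨a, ha⟩ := P.nonempty_of_mem_parts hA
    exact (h ▸ (Finset.notMem_empty a)) (mem_union_left _ ha)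

lemma mergeP_isMergeStep (P : Finpartition (univ : Finset V)) {A B : Finset V}
    (hA : A ∈ P.parts) (hB : B ∈ P.parts) (hAB : A ≠ B) :
    IsMergeStep P (mergeP P A B hA hB hAB) := ⟨A, hA, B, hB, hAB, rfl⟩

lemma mergeP_card (P : Finpartition (univ : Finset V)) {A B : Finset V}
    (hA : A ∈ P.parts) (hB : B ∈ P.parts) (hAB : A ≠ B) :
    (mergeP P A B hA hB hAB).parts.card < P.parts.card := by
  have hne : A ∪ B ∉ (P.parts.erase A).erase B := by
    intro h
    have hmem : A ∪ B ∈ P.parts := mem_of_mem_erase (mem_of_mem_erase h)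
    obtain ⟨a, ha⟩ := P.nonempty_of_mem_parts hA
    have : A ∪ B = A := P.eq_of_mem_parts hmem hA (mem_union_left _ ha) ha
    obtain ⟨b, hb⟩ := P.nonempty_of_mem_parts hB
    have hbA : b ∈ A := this ▸ mem_union_right _ hb
    exact (P.disjoint (mem_coe.2 hA) (mem_coe.2 hB) hAB).forall_ne_finset hbA hb rfl
  have h1 : (mergeP P A B hA hB hAB).parts.card = ((P.parts.erase A).erase B).card + 1 :=
    card_insert_of_notMem hne
  have hBe : B ∈ P.parts.erase A := mem_erase.2 ⟨Ne.symm hAB, hB⟩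
  have h2 : ((P.parts.erase A).erase B).card = P.parts.card - 2 := by
    rw [card_erase_of_mem hBe, card_erase_of_mem hA]
    omega
  have h3 : 2 ≤ P.parts.card := Finset.one_lt_card.2 ⟨A, hA, B, hB, hAB⟩
  omega


/-- One admissible step. -/
def StepOK (G : SimpleGraph V) (w : ℕ) (P Q : Finpartition (univ : Finset V)) : Prop :=
  IsMergeStep P Q ∧ ∀ A ∈ Q.parts, quotDeg G Q A ≤ w

/-- Reachability by admissible steps. -/
def Reach (G : SimpleGraph V) (w : ℕ) : Finpartition (univ : Finset V) →
    Finpartition (univ : Finset V) → Prop :=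
  Relation.ReflTransGen (StepOK G w)

/-- A chain witness. -/
def ChainTo (G : SimpleGraph V) (w : ℕ) (P Q : Finpartition (univ : Finset V)) : Prop :=
  ∃ n : ℕ, ∃ f : Fin (n + 1) → Finpartition (univ : Finset V),
    f 0 = P ∧ f (Fin.last n) = Q ∧
    (∀ i : Fin n, IsMergeStep (f i.castSucc) (f i.succ)) ∧
    (∀ i, ∀ A ∈ (f i).parts, quotDeg G (f i) A ≤ w)

lemma chainTo_snoc {G : SimpleGraph V} {w : ℕ} {P Q R : Finpartition (univ : Finset V)}
    (h : ChainTo G w P Q) (hs : StepOK G w Q R) : ChainTo G w P R := by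
  obtain ⟨n, f, h0, hl, hmerge, hbound⟩ := h
  refine ⟨n + 1, Fin.snoc f R, ?_, ?_, ?_, ?_⟩
  · rw [show (0 : Fin (n+2)) = Fin.castSucc 0 by rfl, Fin.snoc_castSucc]; exact h0
  · simp [Fin.snoc_last]
  · intro i
    refine Fin.lastCases ?_ ?_ i
    · rw [Fin.succ_last, Fin.snoc_last, Fin.snoc_castSucc, hl]
      exact hs.1
    · intro j
      rw [Fin.succ_castSucc, Fin.snoc_castSucc, Fin.snoc_castSucc]
      exact hmerge j
  · intro i
    refine Fin.lastCases ?_ ?_ i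
    · rw [Fin.snoc_last]; exact hs.2
    · intro j; rw [Fin.snoc_castSucc]; exact hbound j

lemma reach_chainTo {G : SimpleGraph V} {w : ℕ} {P Q : Finpartition (univ : Finset V)}
    (h : Reach G w P Q) (h0 : ∀ A ∈ P.parts, quotDeg G P A ≤ w) : ChainTo G w P Q := by
  induction h with
  | refl => exact ⟨0, fun _ => P, rfl, rfl, fun i => i.elim0, fun _ => h0⟩
  | tail _ hstep ih => exact chainTo_snoc ih hstep

lemma seqOK_of_reach {G : SimpleGraph V} {w : ℕ} {Q : Finpartition (univ : Finset V)}
    (h0 : ∀ A ∈ (⊥ : Finpartition (univ : Finset V)).parts, quotDeg G ⊥ A ≤ w)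
    (h : Reach G w ⊥ Q) (hQ : Q.parts.card ≤ 1) : SeqOK G quotDeg w := by
  obtain ⟨n, f, hf0, hfl, hmerge, hbound⟩ := reach_chainTo h h0
  refine ⟨n, f, ?_, by rw [hfl]; exact hQ, hmerge, hbound⟩
  intro A hA
  rw [hf0, Finpartition.parts_bot, mem_map] at hA
  obtain ⟨a, _, rfl⟩ := hA
  rfl


section Pull
variable {W : Type*} [Fintype W] [DecidableEq W] (φ : V → W)

def fiber (x : W) : Finset V := univ.filter fun v => φ v = x

def pullPart (B : Finset W) : Finset V := univ.filter fun v => φ v ∈ B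

lemma pullPart_union (A B : Finset W) :
    pullPart φ (A ∪ B) = pullPart φ A ∪ pullPart φ B := by
  ext v; simp [pullPart]

def pull (Q : Finpartition (univ : Finset W)) : Finpartition (univ : Finset V) :=
  Finpartition.ofErase (Q.parts.image (pullPart φ))
    (by
      rw [Finset.supIndep_iff_pairwiseDisjoint]
      intro X hX Y hY hXY
      simp only [coe_image, Set.mem_image, mem_coe] at hX hY
      obtain ⟨B1, hB1, rfl⟩ := hX
      obtain ⟨B2, hB2, rfl⟩ := hY
      have hne : B1 ≠ B2 := fun h => hXY (by rw [h])
      have hd := Q.disjoint (mem_coe.2 hB1) (mem_coe.2 hB2) hne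
      simp only [Function.onFun, id_eq] at hd ⊢
      rw [Finset.disjoint_left] at hd ⊢
      intro v hv1 hv2
      simp only [pullPart, mem_filter, id] at hv1 hv2
      exact hd hv1.2 hv2.2)
    (by
      apply le_antisymm (Finset.sup_le fun X _ => Finset.subset_univ X)
      intro v _
      obtain ⟨B, hB, hvB⟩ := Q.exists_mem (mem_univ (φ v))
      exact Finset.mem_sup.2 ⟨pullPart φ B, mem_image_of_mem _ hB,
        by simp [pullPart, hvB]⟩)

lemma mem_pull_parts {Q : Finpartition (univ : Finset W)} {X : Finset V} :
    X ∈ (pull φ Q).parts ↔ X.Nonempty ∧ ∃ B ∈ Q.parts, pullPart φ B = X := by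
  show X ∈ (Q.parts.image (pullPart φ)).erase ⊥ ↔ _
  rw [mem_erase, mem_image, Finset.bot_eq_empty, ← nonempty_iff_ne_empty]

lemma pullPart_singleton (x : W) : pullPart φ {x} = fiber φ x := by
  ext v; simp [pullPart, fiber]

lemma pull_bot_parts {X : Finset V} :
    X ∈ (pull φ (⊥ : Finpartition (univ : Finset W))).parts ↔
      X.Nonempty ∧ ∃ x, X = fiber φ x := by
  rw [mem_pull_parts]
  simp only [Finpartition.parts_bot, mem_map, Function.Embedding.coeFn_mk]
  constructor
  · rintro ⟨hne, B, ⟨x, _, rfl⟩, rfl⟩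
    exact ⟨hne, x, (pullPart_singleton φ x)⟩
  · rintro ⟨hne, x, rfl⟩
    exact ⟨hne, {x}, ⟨x, mem_univ x, rfl⟩, pullPart_singleton φ x⟩

lemma pullPart_inj {Q : Finpartition (univ : Finset W)} {B C : Finset W}
    (hB : B ∈ Q.parts) (hC : C ∈ Q.parts) (hne : (pullPart φ B).Nonempty)
    (h : pullPart φ B = pullPart φ C) : B = C := by
  obtain ⟨v, hv⟩ := hne
  have h1 : φ v ∈ B := (mem_filter.1 hv).2
  have hv2 : v ∈ pullPart φ C := h ▸ hv
  have h2 : φ v ∈ C := (mem_filter.1 hv2).2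
  exact Q.eq_of_mem_parts hB hC h1 h2

lemma card_fiber_le (m : ℕ)
    (hm : m = (univ : Finset W).sup fun w : W => Nat.card {v : V // φ v = w}) (x : W) :
    (fiber φ x).card ≤ m := by
  have h : Nat.card {v : V // φ v = x} = (fiber φ x).card := by
    rw [Nat.card_eq_fintype_card, fiber, Fintype.card_subtype]
  rw [← h, hm]
  exact Finset.le_sup (f := fun w : W => Nat.card {v : V // φ v = w}) (mem_univ x)

def Sub1 (P : Finpartition (univ : Finset V)) : Prop :=
  ∀ A ∈ P.parts, ∃ x, A ⊆ fiber φ x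

lemma quotDeg_le_of_sub1 {G : SimpleGraph V} {P : Finpartition (univ : Finset V)}
    {m : ℕ} (hm : m = (univ : Finset W).sup fun w : W => Nat.card {v : V // φ v = w})
    (hP : Sub1 φ P) {A : Finset V} (hA : A ∈ P.parts) :
    quotDeg G P A ≤ m * maxDeg G := by
  classical
  set N : Finset V := A.biUnion (fun u => univ.filter fun v => G.Adj u v) with hN
  have key : quotDeg G P A ≤ N.card := by
    have hcard : Nat.card {v : V // v ∈ N} = N.card := by
      rw [Nat.card_eq_fintype_card, Fintype.card_coe]
    rw [← hcard]
    have hex : ∀ x : {B : Finset V // B ∈ P.parts ∧ B ≠ A ∧ ∃ u ∈ A, ∃ v ∈ B, G.Adj u v},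
        ∃ v, v ∈ N ∧ v ∈ x.1 := by
      rintro ⟨B, hB, hBA, u, hu, v, hv, hadj⟩
      exact ⟨v, mem_biUnion.2 ⟨u, hu, mem_filter.2 ⟨mem_univ v, hadj⟩⟩, hv⟩
    choose g hg1 hg2 using hex
    refine Nat.card_le_card_of_injective (fun x => ⟨g x, hg1 x⟩) ?_
    intro a b h
    have hgab : g a = g b := congrArg Subtype.val h
    exact Subtype.ext (P.eq_of_mem_parts a.2.1 b.2.1 (hg2 a) (hgab ▸ hg2 b))
  have hdegu : ∀ u : V, (univ.filter fun v => G.Adj u v).card = deg G u := by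
    intro u
    rw [deg, Nat.card_eq_fintype_card, ← Set.toFinset_card]
    congr 1
    ext v
    simp [SimpleGraph.mem_neighborSet]
  have h2 : N.card ≤ A.card * maxDeg G := by
    calc N.card ≤ ∑ u ∈ A, (univ.filter fun v => G.Adj u v).card := card_biUnion_le
    _ ≤ ∑ _u ∈ A, maxDeg G := Finset.sum_le_sum fun u _ => by
        rw [hdegu u]; exact Finset.le_sup (mem_univ u)
    _ = A.card * maxDeg G := by rw [sum_const, smul_eq_mul]
  have h3 : A.card ≤ m := by
    obtain ⟨x, hx⟩ := hP A hA
    exact le_trans (card_le_card hx) (card_fiber_le φ m hm x)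
  calc quotDeg G P A ≤ N.card := key
  _ ≤ A.card * maxDeg G := h2
  _ ≤ m * maxDeg G := Nat.mul_le_mul_right _ h3


lemma mergeP_parts (P : Finpartition (univ : Finset V)) {A B : Finset V}
    (hA : A ∈ P.parts) (hB : B ∈ P.parts) (hAB : A ≠ B) :
    (mergeP P A B hA hB hAB).parts = insert (A ∪ B) ((P.parts.erase A).erase B) := rfl

lemma sub1_eq_or_merge {P : Finpartition (univ : Finset V)} (hP : Sub1 φ P) :
    P = pull φ (⊥ : Finpartition (univ : Finset W)) ∨
    ∃ A ∈ P.parts, ∃ B ∈ P.parts, A ≠ B ∧ ∃ x, A ⊆ fiber φ x ∧ B ⊆ fiber φ x := by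
  by_cases hpair : ∃ A ∈ P.parts, ∃ B ∈ P.parts, A ≠ B ∧ ∃ x, A ⊆ fiber φ x ∧ B ⊆ fiber φ x
  · exact Or.inr hpair
  left
  have huniq : ∀ A ∈ P.parts, ∀ B ∈ P.parts, ∀ x, A ⊆ fiber φ x → B ⊆ fiber φ x → A = B := by
    intro A hA B hB x hAx hBx
    by_contra hne
    exact hpair ⟨A, hA, B, hB, hne, x, hAx, hBx⟩
  have hfiber : ∀ v : V, φ v = φ v → v ∈ fiber φ (φ v) := by
    intro v _; simp [fiber]
  refine Finpartition.ext ?_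
  ext X
  rw [pull_bot_parts]
  constructor
  · intro hX
    obtain ⟨x, hsub⟩ := hP X hX
    refine ⟨P.nonempty_of_mem_parts hX, x, ?_⟩
    refine subset_antisymm hsub ?_
    intro v hv
    obtain ⟨B, hB, hvB⟩ := P.exists_mem (mem_univ v)
    obtain ⟨y, hsubB⟩ := hP B hB
    have hyx : fiber φ y = fiber φ x := by
      have h1 : φ v = y := (mem_filter.1 (hsubB hvB)).2
      have h2 : φ v = x := (mem_filter.1 hv).2
      rw [← h1, h2]
    have hBsub : B ⊆ fiber φ x := by rw [← hyx]; exact hsubB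
    have hXB : X = B := huniq X hX B hB x hsub hBsub
    rw [hXB]; exact hvB
  · rintro ⟨hne, x, rfl⟩
    obtain ⟨v, hv⟩ := hne
    obtain ⟨B, hB, hvB⟩ := P.exists_mem (mem_univ v)
    obtain ⟨y, hsubB⟩ := hP B hB
    have hyx : fiber φ y = fiber φ x := by
      have h1 : φ v = y := (mem_filter.1 (hsubB hvB)).2
      have h2 : φ v = x := (mem_filter.1 hv).2
      rw [← h1, h2]
    have hBsub : B ⊆ fiber φ x := by rw [← hyx]; exact hsubB
    have : fiber φ x = B := by
      refine subset_antisymm ?_ hBsub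
      intro u hu
      obtain ⟨C, hC, huC⟩ := P.exists_mem (mem_univ u)
      obtain ⟨z, hsubC⟩ := hP C hC
      have hzx : fiber φ z = fiber φ x := by
        have h1 : φ u = z := (mem_filter.1 (hsubC huC)).2
        have h2 : φ u = x := (mem_filter.1 hu).2
        rw [← h1, h2]
      have hCsub : C ⊆ fiber φ x := by rw [← hzx]; exact hsubC
      have : C = B := huniq C hC B hB x hCsub hBsub
      exact this ▸ huC
    exact this ▸ hB

lemma sub1_reach_aux {G : SimpleGraph V} {w m : ℕ}
    (hm : m = (univ : Finset W).sup fun w : W => Nat.card {v : V // φ v = w})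
    (hw : m * maxDeg G ≤ w) :
    ∀ n (P : Finpartition (univ : Finset V)), P.parts.card ≤ n → Sub1 φ P →
      Reach G w P (pull φ (⊥ : Finpartition (univ : Finset W))) := by
  intro n
  induction n with
  | zero =>
    intro P hc hS
    rcases sub1_eq_or_merge φ hS with h | ⟨A, hA, B, hB, hAB, _⟩
    · rw [h]; exact Relation.ReflTransGen.refl
    · exfalso
      have : 1 < P.parts.card := Finset.one_lt_card.2 ⟨A, hA, B, hB, hAB⟩
      omega
  | succ n ih =>
    intro P hc hS
    rcases sub1_eq_or_merge φ hS with h | ⟨A, hA, B, hB, hAB, x, hAx, hBx⟩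
    · rw [h]; exact Relation.ReflTransGen.refl
    · have hSQ : Sub1 φ (mergeP P A B hA hB hAB) := by
        intro C hC
        rw [mergeP_parts] at hC
        rcases mem_insert.1 hC with rfl | hC'
        · exact ⟨x, union_subset hAx hBx⟩
        · exact hS C (mem_of_mem_erase (mem_of_mem_erase hC'))
      have hstep : StepOK G w P (mergeP P A B hA hB hAB) :=
        ⟨mergeP_isMergeStep P hA hB hAB,
          fun C hC => le_trans (quotDeg_le_of_sub1 φ hm hSQ hC) hw⟩
      refine Relation.ReflTransGen.head hstep (ih _ ?_ hSQ)
      have := mergeP_card P hA hB hAB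
      omega

lemma quotDeg_pull_le {H : SimpleGraph W} {G : SimpleGraph V}
    (hφ : ∀ u v, G.Adj u v → H.Adj (φ u) (φ v) ∨ φ u = φ v)
    {Q : Finpartition (univ : Finset W)} {w : ℕ}
    (hQ : ∀ B ∈ Q.parts, quotDeg H Q B ≤ w) :
    ∀ X ∈ (pull φ Q).parts, quotDeg G (pull φ Q) X ≤ w := by
  intro X hX
  obtain ⟨hXne, B0, hB0, rfl⟩ := (mem_pull_parts φ).1 hX
  refine le_trans ?_ (hQ B0 hB0)
  have hex : ∀ Y : {Y : Finset V // Y ∈ (pull φ Q).parts ∧ Y ≠ pullPart φ B0 ∧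
      ∃ u ∈ pullPart φ B0, ∃ v ∈ Y, G.Adj u v},
      ∃ C, (C ∈ Q.parts ∧ C ≠ B0 ∧ ∃ a ∈ B0, ∃ b ∈ C, H.Adj a b) ∧ pullPart φ C = Y.1 := by
    rintro ⟨Y, hY, hYne, u, hu, v, hv, hadj⟩
    obtain ⟨hYne', C, hC, rfl⟩ := (mem_pull_parts φ).1 hY
    have hCB0 : C ≠ B0 := fun h => hYne (by rw [h])
    have hu' : φ u ∈ B0 := (mem_filter.1 hu).2
    have hv' : φ v ∈ C := (mem_filter.1 hv).2
    rcases hφ u v hadj with h | h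
    · exact ⟨C, ⟨hC, hCB0, φ u, hu', φ v, hv', h⟩, rfl⟩
    · exact absurd (Q.eq_of_mem_parts hC hB0 (h ▸ hv') hu') hCB0
  choose g hg1 hg2 using hex
  refine Nat.card_le_card_of_injective (fun Y => ⟨g Y, hg1 Y⟩) ?_
  intro a b h
  have hgab : g a = g b := congrArg Subtype.val h
  exact Subtype.ext (by rw [← hg2 a, ← hg2 b, hgab])

lemma pull_merge {Q Q' : Finpartition (univ : Finset W)} (h : IsMergeStep Q Q') :
    pull φ Q' = pull φ Q ∨ IsMergeStep (pull φ Q) (pull φ Q') := by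
  obtain ⟨A, hA, B, hB, hAB, hparts⟩ := h
  have hmemQ' : ∀ X, X ∈ Q'.parts ↔ (X = A ∪ B ∨ (X ≠ A ∧ X ≠ B ∧ X ∈ Q.parts)) := by
    intro X
    rw [hparts]
    simp only [mem_insert, mem_erase]
    tauto
  have key : ∀ (A' B' : Finset W), A' ∈ Q.parts → B' ∈ Q.parts →
      (∀ X, X ∈ Q'.parts ↔ (X = A' ∪ B' ∨ (X ≠ A' ∧ X ≠ B' ∧ X ∈ Q.parts))) →
      pullPart φ A' = ∅ → pull φ Q' = pull φ Q := by
    intro A' B' hA' hB' hmem hempty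
    have hun : pullPart φ (A' ∪ B') = pullPart φ B' := by
      rw [pullPart_union, hempty, empty_union]
    refine Finpartition.ext ?_
    ext X
    rw [mem_pull_parts, mem_pull_parts]
    constructor
    · rintro ⟨hXne, C, hC, rfl⟩
      rcases (hmem C).1 hC with rfl | ⟨_, _, hCQ⟩
      · exact ⟨hXne, B', hB', hun.symm⟩
      · exact ⟨hXne, C, hCQ, rfl⟩
    · rintro ⟨hXne, C, hC, rfl⟩
      by_cases hCA : C = A'
      · exact absurd (hCA ▸ hempty) (nonempty_iff_ne_empty.1 hXne)
      by_cases hCB : C = B'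
      · exact ⟨hXne, A' ∪ B', (hmem _).2 (Or.inl rfl), by rw [hun, hCB]⟩
      · exact ⟨hXne, C, (hmem _).2 (Or.inr ⟨hCA, hCB, hC⟩), rfl⟩
  by_cases hAne : (pullPart φ A).Nonempty
  swap
  · exact Or.inl (key A B hA hB hmemQ' (not_nonempty_iff_eq_empty.1 hAne))
  by_cases hBne : (pullPart φ B).Nonempty
  swap
  · refine Or.inl (key B A hB hA (fun X => ?_) (not_nonempty_iff_eq_empty.1 hBne))
    rw [hmemQ' X, union_comm B A]
    tauto
  right
  have hA'mem : pullPart φ A ∈ (pull φ Q).parts := (mem_pull_parts φ).2 ⟨hAne, A, hA, rfl⟩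
  have hB'mem : pullPart φ B ∈ (pull φ Q).parts := (mem_pull_parts φ).2 ⟨hBne, B, hB, rfl⟩
  have hA'B' : pullPart φ A ≠ pullPart φ B :=
    fun h => hAB (pullPart_inj φ hA hB hAne h)
  refine ⟨pullPart φ A, hA'mem, pullPart φ B, hB'mem, hA'B', ?_⟩
  ext X
  rw [mem_pull_parts, mem_insert, mem_erase, mem_erase]
  constructor
  · rintro ⟨hXne, C, hC, rfl⟩
    rcases (hmemQ' C).1 hC with rfl | ⟨hCA, hCB, hCQ⟩
    · exact Or.inl (pullPart_union φ A B)
    · refine Or.inr ⟨fun h => hCB (pullPart_inj φ hCQ hB hXne h), ⟨fun h =>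
        hCA (pullPart_inj φ hCQ hA hXne h), (mem_pull_parts φ).2 ⟨hXne, C, hCQ, rfl⟩⟩⟩
  · rintro (rfl | ⟨hXB, hXA, hXmem⟩)
    · refine ⟨?_, A ∪ B, (hmemQ' _).2 (Or.inl rfl), pullPart_union φ A B⟩
      obtain ⟨v, hv⟩ := hAne
      exact ⟨v, mem_union_left _ hv⟩
    · obtain ⟨hXne, C, hC, rfl⟩ := (mem_pull_parts φ).1 hXmem
      have hCA : C ≠ A := fun h => hXA (by rw [h])
      have hCB : C ≠ B := fun h => hXB (by rw [h])
      exact ⟨hXne, C, (hmemQ' _).2 (Or.inr ⟨hCA, hCB, hC⟩), rfl⟩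

lemma reach_pull {G : SimpleGraph V} {H : SimpleGraph W}
    (hφ : ∀ u v, G.Adj u v → H.Adj (φ u) (φ v) ∨ φ u = φ v)
    {w : ℕ} {n : ℕ} {f : Fin (n + 1) → Finpartition (univ : Finset W)}
    (hmerge : ∀ i : Fin n, IsMergeStep (f i.castSucc) (f i.succ))
    (hbound : ∀ i, ∀ A ∈ (f i).parts, quotDeg H (f i) A ≤ w) :
    ∀ i, Reach G w (pull φ (f 0)) (pull φ (f i)) := by
  intro i
  induction i using Fin.induction with
  | zero => exact Relation.ReflTransGen.refl
  | succ j ihj =>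
    rcases pull_merge φ (hmerge j) with heq | hstep
    · rw [heq]; exact ihj
    · exact Relation.ReflTransGen.tail ihj
        ⟨hstep, quotDeg_pull_le φ hφ (hbound j.succ)⟩

end Pull

lemma reach_to_small (G : SimpleGraph V) :
    ∀ n (P : Finpartition (univ : Finset V)), P.parts.card ≤ n →
      ∃ Q, Reach G (Fintype.card V) P Q ∧ Q.parts.card ≤ 1 := by
  intro n
  induction n with
  | zero => intro P h; exact ⟨P, Relation.ReflTransGen.refl, by omega⟩
  | succ n ih =>
    intro P h
    by_cases h1 : P.parts.card ≤ 1
    · exact ⟨P, Relation.ReflTransGen.refl, h1⟩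
    · obtain ⟨A, hA, B, hB, hAB⟩ := Finset.one_lt_card.1 (show 1 < P.parts.card by omega)
      have hlt := mergeP_card P hA hB hAB
      obtain ⟨R, hR, hR1⟩ := ih (mergeP P A B hA hB hAB)
        (Nat.lt_succ_iff.1 (lt_of_lt_of_le hlt h))
      refine ⟨R, Relation.ReflTransGen.head
        ⟨mergeP_isMergeStep P hA hB hAB, fun C hC => ?_⟩ hR, hR1⟩
      refine le_trans (quotDeg_le_card_parts G _ C) (le_trans
        (Finpartition.card_parts_le_card _) ?_)
      rw [card_univ]

lemma seqOK_card (G : SimpleGraph V) : SeqOK G quotDeg (Fintype.card V) := by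
  obtain ⟨Q, hQ, h1⟩ := reach_to_small G (⊥ : Finpartition (univ : Finset V)).parts.card ⊥ le_rfl
  have hb : ∀ A ∈ (⊥ : Finpartition (univ : Finset V)).parts,
      quotDeg G ⊥ A ≤ Fintype.card V := by
    intro A _
    refine le_trans (quotDeg_le_card_parts G _ A) (le_trans
      (Finpartition.card_parts_le_card _) ?_)
    rw [card_univ]
  exact seqOK_of_reach hb hQ h1

lemma eq_bot_of_parts_card_one {P : Finpartition (univ : Finset V)}
    (h : ∀ A ∈ P.parts, A.card = 1) : P = ⊥ := by
  refine Finpartition.ext ?_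
  ext X
  rw [Finpartition.mem_bot_iff]
  constructor
  · intro hX
    obtain ⟨a, ha⟩ := Finset.card_eq_one.1 (h X hX)
    exact ⟨a, mem_univ a, ha.symm⟩
  · rintro ⟨a, _, rfl⟩
    obtain ⟨C, hC, haC⟩ := P.exists_mem (mem_univ a)
    obtain ⟨b, hb⟩ := Finset.card_eq_one.1 (h C hC)
    have : a = b := by rw [hb] at haC; exact mem_singleton.1 haC
    rw [← this] at hb
    exact hb ▸ hC


lemma seqOK_stww (G : SimpleGraph V) : SeqOK G quotDeg (stww G) := by
  have h : (Fintype.card V) ∈ {w | SeqOK G quotDeg w} := seqOK_card G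
  exact Nat.sInf_mem ⟨_, h⟩

end AuxStww

theorem statement_3 {V W : Type*} [Fintype V] [DecidableEq V] [Fintype W] [DecidableEq W]
    (G : SimpleGraph V) (H : SimpleGraph W) (φ : V → W)
    (hφ : ∀ u v, G.Adj u v → H.Adj (φ u) (φ v) ∨ φ u = φ v)
    (m : ℕ) (hm : m = Finset.univ.sup (fun w : W => Nat.card {v : V // φ v = w})) :
    stww G ≤ max (stww H) (m * maxDeg G) := by
  obtain ⟨n, f, hf0, hfl, hmerge, hbound⟩ := seqOK_stww H
  set w := max (stww H) (m * maxDeg G) with hwdef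
  have hm' : m = (univ : Finset W).sup fun w : W => Nat.card {v : V // φ v = w} := hm
  have hSub1bot : Sub1 φ (⊥ : Finpartition (univ : Finset V)) := by
    intro A hA
    obtain ⟨a, -, rfl⟩ := Finpartition.mem_bot_iff.1 hA
    refine ⟨φ a, fun v hv => ?_⟩
    rw [mem_singleton.1 hv]
    simp [fiber]
  have h1 : Reach G w ⊥ (pull φ (⊥ : Finpartition (univ : Finset W))) :=
    sub1_reach_aux φ hm' (le_max_right _ _) _ ⊥ le_rfl hSub1bot
  have hbound' : ∀ i, ∀ A ∈ (f i).parts, quotDeg H (f i) A ≤ w :=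
    fun i A hA => le_trans (hbound i A hA) (le_max_left _ _)
  have h2 := reach_pull φ hφ hmerge hbound' (Fin.last n)
  rw [eq_bot_of_parts_card_one (hf0)] at h2
  have h3 : Reach G w ⊥ (pull φ (f (Fin.last n))) := Relation.ReflTransGen.trans h1 h2
  have hb0 : ∀ A ∈ (⊥ : Finpartition (univ : Finset V)).parts, quotDeg G ⊥ A ≤ w :=
    fun A hA => le_trans (quotDeg_le_of_sub1 φ hm' hSub1bot hA) (le_max_right _ _)
  have hcard : (pull φ (f (Fin.last n))).parts.card ≤ 1 := by
    refine le_trans ?_ hfl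
    show (((f (Fin.last n)).parts.image (pullPart φ)).erase ⊥).card ≤ _
    exact le_trans (Finset.card_le_card (Finset.erase_subset _ _)) Finset.card_image_le
  exact Nat.sInf_le (seqOK_of_reach hb0 h3 hcard)

end TwwPaper
end
end

section
/- Let q ≥ 2, and let a, b, r, r₁, …, r_a be positive integers with a ≥ b and r_i ≤ r for all i. Let Π = Π(r₁,…,r_a; b, q) be the graph whose vertices are tuples (v₁,…,v_a) with v_i ∈ [q]^{r_i}, where two tuples (v₁,…,v_a) and (u₁,…,u_a) are adjacent if there is a set I ⊆ [a] with |I| = b such that for each i ∈ I the sequences u_i and v_i are equal or close. Then Δ(Π) ≤ r^{2b} · a^b · q^{ar − b(r−1)}. -/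
noncomputable section

namespace TwwPaper

open Finset

variable {V : Type*}

private lemma insertIdx_eraseIdx_self {α : Type*} :
    ∀ (L : List α) (i : ℕ) (h : i < L.length),
      (L.eraseIdx i).insertIdx i (L.get ⟨i, h⟩) = L
  | _ :: _, 0, _ => rfl
  | a :: t, i + 1, h => by
    have ih := insertIdx_eraseIdx_self t i (by simpa using h)
    simpa using ih

/-- Counting sequences that are equal or close to a fixed sequence. -/
private lemma closeFinset_card_le {n q : ℕ} (hn : 0 < n) (hq : 0 < q) (u : Fin n → Fin q)
    (s : Finset (Fin n → Fin q))
    (hs : ∀ w ∈ s, w = u ∨ Close (List.ofFn w) (List.ofFn u)) :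
    s.card ≤ n * n * q := by
  classical
  set d : Fin q := ⟨0, hq⟩ with hd
  set g : Fin n × Fin n × Fin q → (Fin n → Fin q) :=
    fun p k => (((List.ofFn u).eraseIdx p.2.1).insertIdx p.1 p.2.2).getD k d with hg
  have hsub : s ⊆ Finset.image g Finset.univ := by
    intro w hw
    have hclose : Close (List.ofFn w) (List.ofFn u) := by
      rcases hs w hw with rfl | h
      · exact ⟨0, by simpa using hn, 0, by simpa using hn, rfl⟩
      · exact h
    obtain ⟨i0, hi0, j, hj, heq⟩ := hclose
    rw [List.length_ofFn] at hi0 hj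
    refine Finset.mem_image.2 ⟨(⟨i0, hi0⟩, ⟨j, hj⟩, w ⟨i0, hi0⟩), Finset.mem_univ _, ?_⟩
    have hL : ((List.ofFn u).eraseIdx j).insertIdx i0 (w ⟨i0, hi0⟩) = List.ofFn w := by
      rw [← heq]
      have h2 := insertIdx_eraseIdx_self (List.ofFn w) i0 (by simpa using hi0)
      simpa using h2
    funext k
    have hk : (k : ℕ) < (List.ofFn w).length := by simpa using k.2
    simp only [hg, hL]
    rw [List.getD_eq_getElem _ _ hk]
    simp
  calc s.card ≤ (Finset.image g Finset.univ).card := Finset.card_le_card hsub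
    _ ≤ (Finset.univ : Finset (Fin n × Fin n × Fin q)).card := Finset.card_image_le
    _ = n * n * q := by simp [mul_assoc]

theorem statement_4 (a b q r : ℕ) (rfn : Fin a → ℕ)
    (hq : 2 ≤ q) (hb : 0 < b) (hba : b ≤ a) (hr0 : 0 < r)
    (hri : ∀ i, 0 < rfn i) (hrr : ∀ i, rfn i ≤ r) :
    maxDeg (PiGraph a b q rfn) ≤ r ^ (2 * b) * a ^ b * q ^ (a * r - b * (r - 1)) := by
  classical
  have hq0 : 0 < q := by omega
  set G := PiGraph a b q rfn with hG
  have hexp : b + r * (a - b) = a * r - b * (r - 1) := by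
    obtain ⟨c, rfl⟩ := Nat.exists_eq_add_of_le hba
    obtain ⟨s, rfl⟩ := Nat.exists_eq_add_of_le hr0
    have h1 : (b + c) * (1 + s) = b * s + (b + c + c * s) := by ring
    have h2 : b * ((1 + s) - 1) = b * s := by simp
    rw [h1, h2, Nat.add_sub_cancel_left, Nat.add_sub_cancel_left]
    simp only [Nat.succ_eq_add_one, Nat.zero_add]
    ring
  apply Finset.sup_le
  intro u _
  -- the collection of candidate neighbor sets
  set T : Finset (Fin a) → ∀ i : Fin a, Finset (Fin (rfn i) → Fin q) :=
    fun I i => if i ∈ I then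
      Finset.univ.filter (fun w => w = u i ∨ Close (List.ofFn w) (List.ofFn (u i)))
      else Finset.univ with hT
  set B : Finset (∀ i : Fin a, Fin (rfn i) → Fin q) :=
    (Finset.powersetCard b (Finset.univ : Finset (Fin a))).biUnion
      (fun I => Fintype.piFinset (T I)) with hB
  have hsub : G.neighborSet u ⊆ ↑B := by
    intro v hv
    have hadj : G.Adj u v := hv
    rw [hG, PiGraph, SimpleGraph.fromRel_adj] at hadj
    obtain ⟨hne, hrel⟩ := hadj
    have hI : ∃ I : Finset (Fin a), I.card = b ∧
        ∀ i ∈ I, v i = u i ∨ Close (List.ofFn (v i)) (List.ofFn (u i)) := by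
      rcases hrel with ⟨I, hIb, h⟩ | ⟨I, hIb, h⟩
      · refine ⟨I, hIb, fun i hi => ?_⟩
        rcases h i hi with heq | ⟨i0, hi0, j, hj, hcl⟩
        · exact Or.inl heq.symm
        · exact Or.inr ⟨j, hj, i0, hi0, hcl.symm⟩
      · exact ⟨I, hIb, h⟩
    obtain ⟨I, hIb, h⟩ := hI
    refine Finset.mem_coe.2 (Finset.mem_biUnion.2 ⟨I,
      Finset.mem_powersetCard.2 ⟨Finset.subset_univ _, hIb⟩, Fintype.mem_piFinset.2 ?_⟩)
    intro i
    by_cases hiI : i ∈ I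
    · rw [hT]; simp only [if_pos hiI, Finset.mem_filter, Finset.mem_univ, true_and]
      exact h i hiI
    · rw [hT]; simp [if_neg hiI]
  have hdeg : deg G u ≤ B.card := by
    calc deg G u = (G.neighborSet u).ncard := Nat.card_coe_set_eq _
      _ ≤ (↑B : Set _).ncard := Set.ncard_le_ncard hsub (B.finite_toSet)
      _ = B.card := Set.ncard_coe_finset B
  -- bound the size of each piFinset
  have hterm : ∀ I ∈ Finset.powersetCard b (Finset.univ : Finset (Fin a)),
      (Fintype.piFinset (T I)).card ≤ (r * r * q) ^ b * (q ^ r) ^ (a - b) := by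
    intro I hIm
    obtain ⟨-, hIb⟩ := Finset.mem_powersetCard.1 hIm
    rw [Fintype.card_piFinset]
    have hle : ∀ i : Fin a, (T I i).card ≤ if i ∈ I then r * r * q else q ^ r := by
      intro i
      by_cases hiI : i ∈ I
      · rw [hT]; simp only [if_pos hiI]
        calc (Finset.univ.filter (fun w : Fin (rfn i) → Fin q =>
                w = u i ∨ Close (List.ofFn w) (List.ofFn (u i)))).card
            ≤ rfn i * rfn i * q := by
              apply closeFinset_card_le (hri i) hq0 (u i)
              intro w hw
              exact (Finset.mem_filter.1 hw).2
          _ ≤ r * r * q := by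
              have := hrr i
              exact Nat.mul_le_mul (Nat.mul_le_mul this this) le_rfl
      · rw [hT]; simp only [if_neg hiI, Finset.card_univ]
        rw [Fintype.card_fun]
        simp only [Fintype.card_fin]
        exact Nat.pow_le_pow_right hq0 (hrr i)
    calc ∏ i, (T I i).card
        ≤ ∏ i : Fin a, (if i ∈ I then r * r * q else q ^ r) :=
          Finset.prod_le_prod' (fun i _ => hle i)
      _ = (∏ i ∈ I, (if i ∈ I then r * r * q else q ^ r)) *
            ∏ i ∈ Iᶜ, (if i ∈ I then r * r * q else q ^ r) :=
          (Finset.prod_mul_prod_compl I _).symm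
      _ = (r * r * q) ^ b * (q ^ r) ^ (a - b) := by
          rw [Finset.prod_congr rfl (fun i hi => if_pos hi),
            Finset.prod_congr rfl (fun i hi => if_neg (Finset.mem_compl.1 hi)),
            Finset.prod_const, Finset.prod_const, hIb, Finset.card_compl, hIb]
          simp
  calc deg G u ≤ B.card := hdeg
    _ ≤ ∑ I ∈ Finset.powersetCard b (Finset.univ : Finset (Fin a)),
          (Fintype.piFinset (T I)).card := Finset.card_biUnion_le
    _ ≤ ∑ _I ∈ Finset.powersetCard b (Finset.univ : Finset (Fin a)),
          (r * r * q) ^ b * (q ^ r) ^ (a - b) := Finset.sum_le_sum hterm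
    _ = (a.choose b) * ((r * r * q) ^ b * (q ^ r) ^ (a - b)) := by
          rw [Finset.sum_const, Finset.card_powersetCard, Finset.card_univ,
            Fintype.card_fin, smul_eq_mul]
    _ ≤ a ^ b * ((r * r * q) ^ b * (q ^ r) ^ (a - b)) :=
          Nat.mul_le_mul_right _ (Nat.choose_le_pow a b)
    _ = r ^ (2 * b) * a ^ b * q ^ (a * r - b * (r - 1)) := by
          rw [← hexp, pow_add, ← pow_mul q r (a - b), mul_pow,
            show r * r = r ^ 2 by ring, ← pow_mul]
          ring

end TwwPaper
end
end
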